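/- arXiv:1312.1142 — 11 statements merged into one kernel-verified Lean document; each statement's English description precedes it below -/
import Mathlib

section
/- Let A, E ∈ ℝ^{n×n}, B ∈ ℝ^{n×m}, let s_1, …, s_k be positive real numbers and b_1, …, b_k ∈ ℝ^m with ‖b_i‖_2 = 1, and assume A − s_i E is invertible for each i. Define B_{⊥,0} = B and, for i = 1, …, k, the tangential ADI iterates z_i = √(2 s_i) (A − s_i E)^{-1} B_{⊥,i−1} b_i ∈ ℝ^n and B_{⊥,i} = B_{⊥,i−1} + √(2 s_i) E z_i b_iᵀ. Then the low-rank factor Z = [z_1, …, z_k] ∈ ℝ^{n×k} satisfies the residual factorization A (Z Zᵀ) Eᵀ + E (Z Zᵀ) Aᵀ + B Bᵀ = B_{⊥,k} B_{⊥,k}ᵀ; i.e., B_{⊥,k} is a low-rank factor of the Lyapunov residual of the approximation P̂ = Z Zᵀ. -/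
open Matrix

private lemma vmv_transpose {n m : ℕ} (u : Fin n → ℝ) (v : Fin m → ℝ) :
    (vecMulVec u v)ᵀ = vecMulVec v u := by
  ext; simp [vecMulVec_apply, mul_comm]

private lemma mul_vmv {n m p : ℕ} (P : Matrix (Fin n) (Fin m) ℝ) (u : Fin m → ℝ)
    (v : Fin p → ℝ) : P * vecMulVec u v = vecMulVec (P *ᵥ u) v := by
  ext a c; simp [mul_apply, vecMulVec_apply, mulVec, dotProduct, Finset.sum_mul, mul_assoc]

private lemma vmv_mul {n m p : ℕ} (u : Fin n → ℝ) (v : Fin m → ℝ)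
    (P : Matrix (Fin m) (Fin p) ℝ) : vecMulVec u v * P = vecMulVec u (v ᵥ* P) := by
  ext a c; simp [mul_apply, vecMulVec_apply, vecMul, dotProduct, Finset.mul_sum, mul_assoc]

private lemma vmv_mul_vmv {n m p : ℕ} (u : Fin n → ℝ) (v x : Fin m → ℝ) (y : Fin p → ℝ) :
    vecMulVec u v * vecMulVec x y = (v ⬝ᵥ x) • vecMulVec u y := by
  ext a c
  simp only [mul_apply, vecMulVec_apply, dotProduct, Matrix.smul_apply, smul_eq_mul,
    Finset.sum_mul]
  exact Finset.sum_congr rfl fun j _ => by ring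

/-- Tangential low-rank ADI iteration with real shifts (Theorem 4):
the final residual factor `B⊥,k` factorizes the Lyapunov residual of `Z Zᵀ`. -/
theorem tangential_adi_real_shifts
    {n m k : ℕ}
    (A E : Matrix (Fin n) (Fin n) ℝ) (B : Matrix (Fin n) (Fin m) ℝ)
    (s : Fin k → ℝ) (hs : ∀ i, 0 < s i)
    (b : Fin k → Fin m → ℝ) (hb : ∀ i, ∑ j, (b i j) ^ 2 = 1)
    (hinv : ∀ i, IsUnit (A - s i • E).det)
    (z : Fin k → Fin n → ℝ)
    (Bp : Fin (k + 1) → Matrix (Fin n) (Fin m) ℝ)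
    (hBp0 : Bp 0 = B)
    (hz : ∀ i : Fin k,
      z i = Real.sqrt (2 * s i) • ((A - s i • E)⁻¹ *ᵥ (Bp i.castSucc *ᵥ b i)))
    (hBp : ∀ i : Fin k,
      Bp i.succ = Bp i.castSucc + Real.sqrt (2 * s i) • (E * vecMulVec (z i) (b i)))
    (Z : Matrix (Fin n) (Fin k) ℝ) (hZ : ∀ r c, Z r c = z c r) :
    A * (Z * Zᵀ) * Eᵀ + E * (Z * Zᵀ) * Aᵀ + B * Bᵀ
      = Bp (Fin.last k) * (Bp (Fin.last k))ᵀ := by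
  -- key one-step identity
  have key : ∀ i : Fin k, Bp i.succ * (Bp i.succ)ᵀ
      = Bp i.castSucc * (Bp i.castSucc)ᵀ
        + (A * vecMulVec (z i) (z i) * Eᵀ + E * vecMulVec (z i) (z i) * Aᵀ) := by
    intro i
    set c : ℝ := Real.sqrt (2 * s i) with hc
    set P := Bp i.castSucc with hP
    set w : Fin n → ℝ := P *ᵥ b i with hw
    set u : Fin n → ℝ := E *ᵥ z i with hu
    have hc2 : c * c = 2 * s i := Real.mul_self_sqrt (by linarith [hs i])
    have hbb : (b i) ⬝ᵥ (b i) = 1 := by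
      simpa [dotProduct, sq] using hb i
    -- A z = s E z + c w
    have hzz : (A - s i • E) *ᵥ z i = c • w := by
      rw [hz i, mulVec_smul, mulVec_mulVec, Matrix.mul_nonsing_inv _ (hinv i), one_mulVec]
    have hA : A *ᵥ z i = s i • u + c • w := by
      have h1 : (A - s i • E) *ᵥ z i = A *ᵥ z i - s i • u := by
        rw [sub_mulVec, smul_mulVec, hu]
      rw [h1] at hzz
      linear_combination (norm := module) hzz
    have e1 : A * vecMulVec (z i) (z i) * Eᵀ = vecMulVec (A *ᵥ z i) u := by
      rw [mul_vmv, vmv_mul, vecMul_transpose]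
    have e2 : E * vecMulVec (z i) (z i) * Aᵀ = vecMulVec u (A *ᵥ z i) := by
      rw [mul_vmv, vmv_mul, vecMul_transpose, hu]
    have e3 : Bp i.succ = P + c • vecMulVec u (b i) := by
      rw [hBp i, mul_vmv, hu, hP, hc]
    rw [e1, e2, e3, hA]
    have hvmv1 : vecMulVec (s i • u + c • w) u
        = s i • vecMulVec u u + c • vecMulVec w u := by
      ext a d; simp [vecMulVec_apply]; ring
    have hvmv2 : vecMulVec u (s i • u + c • w)
        = s i • vecMulVec u u + c • vecMulVec u w := by
      ext a d; simp [vecMulVec_apply]; ring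
    rw [hvmv1, hvmv2]
    rw [transpose_add, transpose_smul, vmv_transpose]
    rw [Matrix.add_mul, Matrix.mul_add, Matrix.mul_add, Matrix.smul_mul, Matrix.smul_mul,
      Matrix.mul_smul, Matrix.mul_smul, vmv_mul_vmv, hbb, one_smul]
    have h4 : P * vecMulVec (b i) u = vecMulVec w u := by rw [mul_vmv, hw]
    have h5 : vecMulVec u (b i) * Pᵀ = vecMulVec u w := by
      rw [vmv_mul, vecMul_transpose, hw]
    rw [h4, h5, smul_smul, hc2]
    match_scalars <;> ring
  -- Z Zᵀ as a sum of rank-one matrices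
  have hZZ : Z * Zᵀ = ∑ i : Fin k, vecMulVec (z i) (z i) := by
    ext p q
    simp [mul_apply, hZ, vecMulVec_apply, Matrix.sum_apply]
  -- telescoping
  have hle : ∀ j : ℕ, j ∈ Finset.range k → j + 1 ≤ k := fun j hj =>
    Nat.succ_le_of_lt (Finset.mem_range.mp hj)
  classical
  set G : ℕ → Matrix (Fin n) (Fin n) ℝ := fun j =>
    if h : j ≤ k then Bp ⟨j, Nat.lt_succ_of_le h⟩ * (Bp ⟨j, Nat.lt_succ_of_le h⟩)ᵀ else 0
    with hG
  have hGk : G k = Bp (Fin.last k) * (Bp (Fin.last k))ᵀ := by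
    simp [hG, Fin.last]
  have hG0 : G 0 = B * Bᵀ := by
    simp [hG, show (⟨0, Nat.lt_succ_of_le (Nat.zero_le k)⟩ : Fin (k+1)) = 0 from rfl, hBp0]
  have step : ∀ i : Fin k, G (i + 1) - G i
      = A * vecMulVec (z i) (z i) * Eᵀ + E * vecMulVec (z i) (z i) * Aᵀ := by
    intro i
    have h1 : (i : ℕ) + 1 ≤ k := i.isLt
    have h2 : (i : ℕ) ≤ k := le_of_lt i.isLt
    have e1 : (⟨(i : ℕ) + 1, Nat.lt_succ_of_le h1⟩ : Fin (k+1)) = i.succ := rfl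
    have e2 : (⟨(i : ℕ), Nat.lt_succ_of_le h2⟩ : Fin (k+1)) = i.castSucc := rfl
    simp only [hG, dif_pos h1, dif_pos h2, e1, e2, key i]
    abel
  have tele : ∑ i : Fin k, (G ((i : ℕ) + 1) - G (i : ℕ)) = G k - G 0 := by
    rw [Fin.sum_univ_eq_sum_range (fun j => G (j + 1) - G j) k]
    exact Finset.sum_range_sub G k
  rw [hZZ, Finset.mul_sum, Finset.sum_mul, Finset.mul_sum, Finset.sum_mul,
    ← Finset.sum_add_distrib]
  have : ∑ i : Fin k, (A * vecMulVec (z i) (z i) * Eᵀ + E * vecMulVec (z i) (z i) * Aᵀ)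
      = Bp (Fin.last k) * (Bp (Fin.last k))ᵀ - B * Bᵀ := by
    rw [← Finset.sum_congr rfl (fun i _ => (step i)), tele, hGk, hG0]
  rw [this]
  abel
end

section
/- Let A, E ∈ ℝ^{n×n}, B ∈ ℝ^{n×m}. For i = 1, …, k let s_i ∈ ℂ with Re(s_i) > 0 and Im(s_i) ≠ 0, let b_i ∈ ℂ^m with ‖b_i‖_2 = 1, and assume A − s_i E is invertible. Define B_{⊥,0} = B and, for i = 1, …, k: y_i = √(2 Re(s_i)) (A − s_i E)^{-1} B_{⊥,i−1} b_i, α_i = (b_i^H b̄_i)·Re(s_i)/s̄_i, β_i = 1/√(1 − α_i ᾱ_i), Z_i = [y_i, β_i(ȳ_i − α_i y_i)] ∈ ℂ^{n×2}, L_i = √(2 Re(s_i))·[b_i, β_i(b̄_i − α_i b_i)] ∈ ℂ^{m×2}, and B_{⊥,i} = B_{⊥,i−1} + E Z_i L_i^H. Then every B_{⊥,i} is a real matrix, Z Z^H is real symmetric for Z = [Z_1, …, Z_k], and the residual factorization A (Z Z^H) Eᵀ + E (Z Z^H) Aᵀ + B Bᵀ = B_{⊥,k} B_{⊥,k}ᵀ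 holds. -/
open Matrix Complex

section aux
variable {p q r : Type*} [Fintype p] [Fintype q] [Fintype r]

lemma myMul_vecMulVec (M : Matrix p q ℂ) (x : q → ℂ) (v : r → ℂ) :
    M * vecMulVec x v = vecMulVec (M *ᵥ x) v := by
  ext i j
  simp [vecMulVec_apply, mul_apply, mulVec, dotProduct, Finset.sum_mul, mul_assoc]

lemma myVecMulVec_mul (x : p → ℂ) (v : q → ℂ) (M : Matrix q r ℂ) :
    vecMulVec x v * M = vecMulVec x (v ᵥ* M) := by
  ext i j
  simp [vecMulVec_apply, mul_apply, vecMul, dotProduct, Finset.mul_sum, mul_assoc]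

lemma myVecMulVec_mul_vecMulVec (x : p → ℂ) (v : q → ℂ) (w : q → ℂ) (u : r → ℂ) :
    vecMulVec x v * vecMulVec w u = (v ⬝ᵥ w) • vecMulVec x u := by
  ext i j
  simp [vecMulVec_apply, mul_apply, dotProduct, Finset.sum_mul, Finset.mul_sum]
  congr 1; ext t; ring

lemma myVecMulVec_conjTranspose (x : p → ℂ) (v : q → ℂ) :
    (vecMulVec x v)ᴴ = vecMulVec (star v) (star x) := by
  ext i j
  simp [vecMulVec_apply, conjTranspose_apply, mul_comm]

/-- helper -/
lemma myStar_vecMul {P Q : Type*} [Fintype Q] (Mx : Matrix P Q ℂ) (v : Q → ℂ) :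
    star v ᵥ* Mxᴴ = star (Mx *ᵥ v) := (star_mulVec Mx v).symm

lemma myVecMulVec_mulVec {P Q : Type*} [Fintype Q] (a : P → ℂ) (v : Q → ℂ) (x : Q → ℂ) :
    vecMulVec a v *ᵥ x = (v ⬝ᵥ x) • a := by
  ext i
  simp only [vecMulVec_apply, mulVec, dotProduct, Pi.smul_apply, smul_eq_mul,
    Finset.sum_mul]
  exact Finset.sum_congr rfl fun t _ => by ring

/-- Core algebraic identity for one double ADI step. -/
lemma adi_step_core {N M : Type*} [Fintype N] [Fintype M]
    (Ac Ec : Matrix N N ℂ) (Bp : Matrix N M ℂ)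
    (u w : N → ℂ) (l1 l2 : M → ℂ) (s γ : ℂ)
    (h1 : Ac *ᵥ u = s • (Ec *ᵥ u) + Bp *ᵥ l1)
    (h2 : Ac *ᵥ w = (star s) • (Ec *ᵥ w) + γ • (Ec *ᵥ u) + Bp *ᵥ l2)
    (hl1 : star l1 ⬝ᵥ l1 = s + star s)
    (hl2 : star l2 ⬝ᵥ l2 = s + star s)
    (hl12 : star l1 ⬝ᵥ l2 = γ) :
    Ac * (vecMulVec u (star u) + vecMulVec w (star w)) * Ecᴴ
      + Ec * (vecMulVec u (star u) + vecMulVec w (star w)) * Acᴴ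
      + Bp * Bpᴴ
    = (Bp + Ec * (vecMulVec u (star l1) + vecMulVec w (star l2)))
      * (Bp + Ec * (vecMulVec u (star l1) + vecMulVec w (star l2)))ᴴ := by
  have hl21 : star l2 ⬝ᵥ l1 = star γ := by
    rw [← hl12]
    simp [dotProduct, star_sum, mul_comm]
  simp only [Matrix.mul_add, Matrix.add_mul, conjTranspose_add, conjTranspose_mul,
    myVecMulVec_conjTranspose, star_star, Matrix.mul_assoc, myVecMulVec_mul,
    myStar_vecMul, myMul_vecMulVec, myVecMulVec_mul_vecMulVec,
    myVecMulVec_mulVec, mul_smul_comm, smul_mul_assoc]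
  rw [h1, h2, hl1, hl2, hl12, hl21]
  ext i j
  simp only [Matrix.add_apply, Matrix.smul_apply, vecMulVec_apply, Pi.star_apply,
    Pi.add_apply, Pi.smul_apply, smul_eq_mul, star_add, star_mul', star_smul,
    star_star, starRingEnd_apply]
  ring

end aux

lemma adi_scalar_facts {M : Type*} [Fintype M] (S : ℂ) (hre : 0 < S.re) (him : S.im ≠ 0)
    (b : M → ℂ) (hb : ∑ j, Complex.normSq (b j) = 1)
    (α : ℂ) (hα : α = (∑ j, (starRingEnd ℂ (b j))^2) * ((S.re : ℂ) / star S))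
    (β : ℝ) (hβ : β = (Real.sqrt (1 - Complex.normSq α))⁻¹)
    (c : ℝ) (hc : c = Real.sqrt (2 * S.re))
    (l1 l2 : M → ℂ) (hl1d : l1 = fun j => (c:ℂ) * b j)
    (hl2d : l2 = fun j => (c:ℂ) * ((β:ℂ) * (star (b j) - α * b j)))
    (γ : ℂ) (hγ : γ = α * (β:ℂ) * (star S - S)) :
    (β:ℂ)^2 * (1 - starRingEnd ℂ α * α) = 1
    ∧ star l1 ⬝ᵥ l1 = S + star S
    ∧ star l2 ⬝ᵥ l2 = S + star S
    ∧ star l1 ⬝ᵥ l2 = γ := by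
  set σ : ℂ := ∑ j, (starRingEnd ℂ (b j))^2 with hσ
  have hS0 : S ≠ 0 := fun h => by simp [h] at hre
  have hSc0 : star S ≠ 0 := star_ne_zero.mpr hS0
  have hSc0' : (starRingEnd ℂ) S ≠ 0 := hSc0
  have hr' : ((S.re : ℝ) : ℂ) = (S + star S)/2 := by
    rw [Complex.star_def, Complex.add_conj]; push_cast; ring
  -- ∑ conj b * b = 1
  have hsum1 : ∑ j, starRingEnd ℂ (b j) * b j = 1 := by
    have : ∀ j : M, starRingEnd ℂ (b j) * b j = ((Complex.normSq (b j) : ℝ) : ℂ) := by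
      intro j; rw [Complex.normSq_eq_conj_mul_self]
    rw [Finset.sum_congr rfl fun j _ => this j, ← Complex.ofReal_sum, hb,
      Complex.ofReal_one]
  -- ∑ b^2 = conj σ
  have hsum2 : ∑ j, b j * b j = starRingEnd ℂ σ := by
    rw [hσ, map_sum]
    exact Finset.sum_congr rfl fun j _ => by rw [map_pow, Complex.conj_conj]; ring
  -- |α|² < 1
  have habsσ : ‖σ‖ ≤ 1 := by
    calc ‖σ‖ ≤ ∑ j, ‖(starRingEnd ℂ (b j))^2‖ :=
          norm_sum_le _ _
    _ = ∑ j, Complex.normSq (b j) := by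
          refine Finset.sum_congr rfl fun j _ => ?_
          rw [norm_pow, Complex.sq_norm, Complex.normSq_conj]
    _ = 1 := hb
  have hnσ : Complex.normSq σ ≤ 1 := by
    rw [← Complex.sq_norm]; nlinarith [norm_nonneg σ]
  have hnq : Complex.normSq (((S.re : ℝ) : ℂ) / star S) < 1 := by
    rw [Complex.normSq_div, Complex.normSq_ofReal]
    have h1 : Complex.normSq (star S) = S.re * S.re + S.im * S.im := by
      rw [Complex.star_def, Complex.normSq_conj, Complex.normSq_apply]
    rw [h1, div_lt_one (by nlinarith [sq_nonneg S.im, mul_self_pos.mpr him])]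
    nlinarith [mul_self_pos.mpr him]
  have hnα : Complex.normSq α < 1 := by
    rw [hα, _root_.map_mul]
    nlinarith [Complex.normSq_nonneg σ, Complex.normSq_nonneg (((S.re : ℝ) : ℂ) / star S)]
  have hpos : (0:ℝ) < 1 - Complex.normSq α := by linarith
  have hβ2R : β^2 * (1 - Complex.normSq α) = 1 := by
    rw [hβ, inv_pow, Real.sq_sqrt hpos.le]
    exact inv_mul_cancel₀ (ne_of_gt hpos)
  have hβ2 : (β:ℂ)^2 * (1 - starRingEnd ℂ α * α) = 1 := by
    have := congrArg (Complex.ofReal) hβ2R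
    push_cast at this
    rwa [Complex.normSq_eq_conj_mul_self] at this
  have hc2 : ((c:ℝ):ℂ)^2 = S + star S := by
    rw [hc, ← Complex.ofReal_pow, Real.sq_sqrt (by positivity), Complex.star_def,
      Complex.add_conj]
  have hαc : starRingEnd ℂ α = starRingEnd ℂ σ * (((S.re : ℝ):ℂ) / S) := by
    rw [hα, _root_.map_mul, map_div₀, Complex.conj_ofReal, Complex.star_def, Complex.conj_conj]
  have h2r' : S + star S = 2 * ((S.re:ℝ):ℂ) := by
    rw [Complex.star_def, Complex.add_conj]; push_cast; ring
  have hαS : α * star S = σ * ((S.re:ℝ):ℂ) := by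
    rw [hα, mul_assoc, div_mul_cancel₀ _ hSc0]
  have hαcS : (starRingEnd ℂ) α * S = (starRingEnd ℂ) σ * ((S.re:ℝ):ℂ) := by
    rw [hαc, mul_assoc, div_mul_cancel₀ _ hS0]
  refine ⟨hβ2, ?_, ?_, ?_⟩
  · -- hl1
    rw [hl1d]
    calc (star fun j => (c:ℂ) * b j) ⬝ᵥ (fun j => (c:ℂ) * b j)
        = (c:ℂ)^2 * ∑ j, starRingEnd ℂ (b j) * b j := by
          rw [Finset.mul_sum]
          refine Finset.sum_congr rfl fun j _ => ?_
          simp only [Pi.star_apply, star_mul', Complex.star_def, Complex.conj_ofReal]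
          ring
    _ = S + star S := by rw [hsum1, mul_one, hc2]
  · -- hl2
    rw [hl2d]
    have keyM : S * star S * ((1 + starRingEnd ℂ α * α) - α * starRingEnd ℂ σ
          - starRingEnd ℂ α * σ) = S * star S * (1 - starRingEnd ℂ α * α) := by
      linear_combination (2*(starRingEnd ℂ) α*S - (starRingEnd ℂ) σ*S) * hαS
        + (2*σ*((S.re:ℝ):ℂ) - σ*star S) * hαcS
        - σ*(starRingEnd ℂ) σ*((S.re:ℝ):ℂ) * h2r'
    have key : (1 + starRingEnd ℂ α * α) - α * starRingEnd ℂ σ - starRingEnd ℂ α * σ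
        = 1 - starRingEnd ℂ α * α :=
      mul_left_cancel₀ (mul_ne_zero hS0 hSc0) keyM
    have hterm : ∀ j : M, star ((c:ℂ) * ((β:ℂ) * (star (b j) - α * b j)))
          * ((c:ℂ) * ((β:ℂ) * (star (b j) - α * b j)))
        = ((c:ℂ)^2*(β:ℂ)^2*(1 + starRingEnd ℂ α * α)) * (starRingEnd ℂ (b j) * b j)
          - ((c:ℂ)^2*(β:ℂ)^2*α) * (b j * b j)
          - ((c:ℂ)^2*(β:ℂ)^2*starRingEnd ℂ α) * ((starRingEnd ℂ (b j))^2) := by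
      intro j
      simp only [star_mul', star_sub, star_star, Complex.star_def, Complex.conj_conj, Complex.conj_ofReal]
      ring
    calc (star fun j => (c:ℂ) * ((β:ℂ) * (star (b j) - α * b j))) ⬝ᵥ
          (fun j => (c:ℂ) * ((β:ℂ) * (star (b j) - α * b j)))
        = ∑ j, (((c:ℂ)^2*(β:ℂ)^2*(1 + starRingEnd ℂ α * α)) * (starRingEnd ℂ (b j) * b j)
          - ((c:ℂ)^2*(β:ℂ)^2*α) * (b j * b j)
          - ((c:ℂ)^2*(β:ℂ)^2*starRingEnd ℂ α) * ((starRingEnd ℂ (b j))^2)) := by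
          simp only [dotProduct, Pi.star_apply]
          exact Finset.sum_congr rfl fun j _ => hterm j
    _ = ((c:ℂ)^2*(β:ℂ)^2*(1 + starRingEnd ℂ α * α)) * (∑ j, starRingEnd ℂ (b j) * b j)
          - ((c:ℂ)^2*(β:ℂ)^2*α) * (∑ j, b j * b j)
          - ((c:ℂ)^2*(β:ℂ)^2*starRingEnd ℂ α) * σ := by
          rw [Finset.sum_sub_distrib, Finset.sum_sub_distrib, ← Finset.mul_sum,
            ← Finset.mul_sum, ← Finset.mul_sum, ← hσ]
    _ = S + star S := by
          rw [hsum1, hsum2]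
          linear_combination ((c:ℂ)^2*(β:ℂ)^2) * key + (c:ℂ)^2 * hβ2 + hc2
  · -- hl12
    rw [hl1d, hl2d, hγ]
    have keyM2 : star S * (((c:ℂ)^2) * (σ - α)) = star S * (α * (star S - S)) := by
      linear_combination (star S*(σ - α))*hc2 - 2*star S*hαS + σ*star S*h2r'
    have key2 : ((c:ℂ)^2) * (σ - α) = α * (star S - S) :=
      mul_left_cancel₀ hSc0 keyM2
    have hterm : ∀ j : M, star ((c:ℂ) * b j) * ((c:ℂ) * ((β:ℂ) * (star (b j) - α * b j)))
        = ((c:ℂ)^2*(β:ℂ)) * ((starRingEnd ℂ (b j))^2)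
          - ((c:ℂ)^2*(β:ℂ)*α) * (starRingEnd ℂ (b j) * b j) := by
      intro j
      simp only [star_mul', Complex.star_def, Complex.conj_conj, Complex.conj_ofReal]
      ring
    calc (star fun j => (c:ℂ) * b j) ⬝ᵥ (fun j => (c:ℂ) * ((β:ℂ) * (star (b j) - α * b j)))
        = ∑ j, (((c:ℂ)^2*(β:ℂ)) * ((starRingEnd ℂ (b j))^2)
            - ((c:ℂ)^2*(β:ℂ)*α) * (starRingEnd ℂ (b j) * b j)) := by
          simp only [dotProduct, Pi.star_apply]
          exact Finset.sum_congr rfl fun j _ => hterm j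
    _ = ((c:ℂ)^2*(β:ℂ)) * σ - ((c:ℂ)^2*(β:ℂ)*α) * (∑ j, starRingEnd ℂ (b j) * b j) := by
          rw [Finset.sum_sub_distrib, ← Finset.mul_sum, ← Finset.mul_sum, ← hσ]
    _ = α * (β:ℂ) * (star S - S) := by
          rw [hsum1]
          linear_combination (β:ℂ) * key2


lemma real_mulVec {P Q : Type*} [Fintype Q] (M : Matrix P Q ℂ)
    (hM : ∀ r c, starRingEnd ℂ (M r c) = M r c) (v : Q → ℂ) :
    star (M *ᵥ v) = M *ᵥ star v := by
  funext r
  simp only [Pi.star_apply, mulVec, dotProduct, star_sum, star_mul', Pi.star_apply,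
    Complex.star_def]
  exact Finset.sum_congr rfl fun t _ => by rw [hM r t]

/-- The full induction step. -/
lemma adi_step_full {n m : ℕ} (Ac Ec : Matrix (Fin n) (Fin n) ℂ)
    (Bp Bp' : Matrix (Fin n) (Fin m) ℂ)
    (hAr : ∀ r c, starRingEnd ℂ (Ac r c) = Ac r c)
    (hEr : ∀ r c, starRingEnd ℂ (Ec r c) = Ec r c)
    (hBr : ∀ r c, starRingEnd ℂ (Bp r c) = Bp r c)
    (S : ℂ) (hre : 0 < S.re) (him : S.im ≠ 0)
    (bv : Fin m → ℂ) (hb : ∑ j, Complex.normSq (bv j) = 1)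
    (hinv : IsUnit (Ac - S • Ec).det)
    (u : Fin n → ℂ)
    (hu : u = (Real.sqrt (2*S.re) : ℂ) • ((Ac - S • Ec)⁻¹ *ᵥ (Bp *ᵥ bv)))
    (α : ℂ) (hα : α = (∑ j, (starRingEnd ℂ (bv j))^2) * (((S.re : ℝ):ℂ)/star S))
    (β : ℝ) (hβ : β = (Real.sqrt (1 - Complex.normSq α))⁻¹)
    (Zb : Matrix (Fin n) (Fin 2) ℂ)
    (hZb : Zb = Matrix.of fun r => ![u r, (β:ℂ) * (star (u r) - α * u r)])
    (Lb : Matrix (Fin m) (Fin 2) ℂ)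
    (hLb : Lb = Matrix.of fun j => ![(Real.sqrt (2*S.re):ℂ) * bv j,
        (Real.sqrt (2*S.re):ℂ) * ((β:ℂ) * (star (bv j) - α * bv j))])
    (hBp' : Bp' = Bp + Ec * Zb * Lbᴴ) :
    (∀ r c, starRingEnd ℂ (Bp' r c) = Bp' r c)
    ∧ (∀ r c, starRingEnd ℂ ((Zb * Zbᴴ) r c) = (Zb * Zbᴴ) r c)
    ∧ Ac * (Zb * Zbᴴ) * Ecᴴ + Ec * (Zb * Zbᴴ) * Acᴴ + Bp * Bpᴴ = Bp' * Bp'ᴴ := by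
  set c : ℝ := Real.sqrt (2*S.re) with hc
  set w : Fin n → ℂ := fun r => (β:ℂ) * (star (u r) - α * u r) with hw
  set l1 : Fin m → ℂ := fun j => (c:ℂ) * bv j with hl1d
  set l2 : Fin m → ℂ := fun j => (c:ℂ) * ((β:ℂ) * (star (bv j) - α * bv j)) with hl2d
  set γ : ℂ := α * (β:ℂ) * (star S - S) with hγ
  obtain ⟨hβ2, hd1, hd2, hd12⟩ :=
    adi_scalar_facts S hre him bv hb α hα β hβ c hc l1 l2 hl1d hl2d γ hγ
  -- block products in rank-one form
  have hZZb : Zb * Zbᴴ = vecMulVec u (star u) + vecMulVec w (star w) := by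
    ext r t
    rw [hZb]
    simp only [mul_apply, conjTranspose_apply, Fin.sum_univ_two, Matrix.of_apply,
      Matrix.cons_val_zero, Matrix.cons_val_one, Matrix.head_cons,
      Matrix.add_apply, vecMulVec_apply, Pi.star_apply, hw]
  have hZLb : Zb * Lbᴴ = vecMulVec u (star l1) + vecMulVec w (star l2) := by
    ext r t
    rw [hZb, hLb]
    simp only [mul_apply, conjTranspose_apply, Fin.sum_univ_two, Matrix.of_apply,
      Matrix.cons_val_zero, Matrix.cons_val_one, Matrix.head_cons,
      Matrix.add_apply, vecMulVec_apply, Pi.star_apply, hw, hl1d, hl2d]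
  -- basic vector relation
  have h1 : Ac *ᵥ u = S • (Ec *ᵥ u) + Bp *ᵥ l1 := by
    have hAu : (Ac - S • Ec) *ᵥ u = (c:ℂ) • (Bp *ᵥ bv) := by
      rw [hu, mulVec_smul, mulVec_mulVec, Matrix.mul_nonsing_inv _ hinv, one_mulVec]
    rw [sub_mulVec, smul_mulVec] at hAu
    have hBl1 : Bp *ᵥ l1 = (c:ℂ) • (Bp *ᵥ bv) := by
      rw [hl1d]
      rw [show (fun j => (c:ℂ) * bv j) = (c:ℂ) • bv from rfl, mulVec_smul]
    rw [hBl1]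
    exact sub_eq_iff_eq_add'.mp hAu
  have hstar_u : Ac *ᵥ star u = star S • (Ec *ᵥ star u) + Bp *ᵥ star l1 := by
    have := congrArg star h1
    rw [star_add, star_smul, real_mulVec Ac hAr, real_mulVec Ec hEr,
      real_mulVec Bp hBr] at this
    exact this
  have hwdec : w = (β:ℂ) • star u - ((β:ℂ) * α) • u := by
    funext r; simp only [hw, Pi.sub_apply, Pi.smul_apply, Pi.star_apply, smul_eq_mul]; ring
  have hl2dec : l2 = (β:ℂ) • star l1 - ((β:ℂ) * α) • l1 := by
    funext j
    simp only [hl2d, hl1d, Pi.sub_apply, Pi.smul_apply, Pi.star_apply, smul_eq_mul,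
      star_mul', Complex.star_def, Complex.conj_ofReal]
    ring
  have h2 : Ac *ᵥ w = star S • (Ec *ᵥ w) + γ • (Ec *ᵥ u) + Bp *ᵥ l2 := by
    rw [hwdec, hl2dec, mulVec_sub, mulVec_smul, mulVec_smul, mulVec_sub, mulVec_smul,
      mulVec_smul, mulVec_sub, mulVec_smul, mulVec_smul, hstar_u, h1, hγ]
    funext r
    simp only [Pi.add_apply, Pi.sub_apply, Pi.smul_apply, smul_eq_mul]
    ring
  refine ⟨?_, ?_, ?_⟩
  · -- realness of Bp'
    have hEw : ∀ r, (Ec *ᵥ w) r = (β:ℂ) * (star ((Ec *ᵥ u) r) - α * ((Ec *ᵥ u) r)) := by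
      intro r
      have : Ec *ᵥ w = (β:ℂ) • (Ec *ᵥ star u) - ((β:ℂ) * α) • (Ec *ᵥ u) := by
        rw [hwdec, mulVec_sub, mulVec_smul, mulVec_smul]
      rw [this, ← real_mulVec Ec hEr]
      simp only [Pi.sub_apply, Pi.smul_apply, Pi.star_apply, smul_eq_mul]
      ring
    have hN : Ec * Zb * Lbᴴ = vecMulVec (Ec *ᵥ u) (star l1) + vecMulVec (Ec *ᵥ w) (star l2) := by
      rw [Matrix.mul_assoc, hZLb, Matrix.mul_add, myMul_vecMulVec, myMul_vecMulVec]
    intro r t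
    rw [hBp', hN]
    simp only [Matrix.add_apply, vecMulVec_apply, Pi.star_apply, hl1d, hl2d, hEw]
    simp only [_root_.map_add, _root_.map_mul, _root_.map_sub, star_mul', star_sub,
      star_star, Complex.star_def, Complex.conj_conj, Complex.conj_ofReal, hBr r t]
    linear_combination (-(c:ℂ) * (starRingEnd ℂ ((Ec *ᵥ u) r) * bv t
      - (Ec *ᵥ u) r * starRingEnd ℂ (bv t))) * hβ2
  · -- realness of Zb Zbᴴ
    intro r t
    rw [hZZb]
    simp only [Matrix.add_apply, vecMulVec_apply, Pi.star_apply, hw]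
    simp only [_root_.map_add, _root_.map_mul, _root_.map_sub, star_mul', star_sub,
      star_star, Complex.star_def, Complex.conj_conj, Complex.conj_ofReal]
    linear_combination (-(starRingEnd ℂ (u r) * u t - u r * starRingEnd ℂ (u t))) * hβ2
  · rw [hBp', hZZb, Matrix.mul_assoc Ec Zb Lbᴴ, hZLb]
    exact adi_step_core Ac Ec Bp u w l1 l2 S γ h1 h2 hd1 hd2 hd12

/-- Tangential low-rank ADI iteration for complex conjugated shift pairs
(Theorem 5): every residual factor `B⊥,i` is real, `Z Zᴴ` is real symmetric,
and the Lyapunov residual of `Z Zᴴ` factorizes as `B⊥,k B⊥,kᵀ`. -/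
theorem tangential_adi_complex_shifts
    {n m k : ℕ}
    (A E : Matrix (Fin n) (Fin n) ℝ) (B : Matrix (Fin n) (Fin m) ℝ)
    (Ac Ec : Matrix (Fin n) (Fin n) ℂ) (Bc : Matrix (Fin n) (Fin m) ℂ)
    (hAc : Ac = A.map Complex.ofReal) (hEc : Ec = E.map Complex.ofReal)
    (hBc : Bc = B.map Complex.ofReal)
    (s : Fin k → ℂ) (hs : ∀ i, 0 < (s i).re) (him : ∀ i, (s i).im ≠ 0)
    (b : Fin k → Fin m → ℂ) (hb : ∀ i, ∑ j, Complex.normSq (b i j) = 1)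
    (hinv : ∀ i, IsUnit (Ac - s i • Ec).det)
    (y : Fin k → Fin n → ℂ)
    (α : Fin k → ℂ) (β : Fin k → ℝ)
    (Zblk : Fin k → Matrix (Fin n) (Fin 2) ℂ)
    (Lblk : Fin k → Matrix (Fin m) (Fin 2) ℂ)
    (Bp : Fin (k + 1) → Matrix (Fin n) (Fin m) ℂ)
    (hBp0 : Bp 0 = Bc)
    (hy : ∀ i, y i = (Real.sqrt (2 * (s i).re) : ℂ) •
        ((Ac - s i • Ec)⁻¹ *ᵥ (Bp i.castSucc *ᵥ b i)))
    -- αᵢ = (bᵢᴴ b̄ᵢ)·Re(sᵢ)/s̄ᵢ ;  βᵢ = 1/√(1 − αᵢ ᾱᵢ)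
    (hα : ∀ i, α i = (∑ j, (starRingEnd ℂ (b i j)) ^ 2)
        * (((s i).re : ℂ) / star (s i)))
    (hβ : ∀ i, β i = (Real.sqrt (1 - Complex.normSq (α i)))⁻¹)
    -- Zᵢ = [yᵢ, βᵢ(ȳᵢ − αᵢ yᵢ)]
    (hZblk : ∀ i, Zblk i
      = Matrix.of fun r => ![y i r, (β i : ℂ) * (star (y i r) - α i * y i r)])
    -- Lᵢ = √(2 Re sᵢ)·[bᵢ, βᵢ(b̄ᵢ − αᵢ bᵢ)]
    (hLblk : ∀ i, Lblk i
      = Matrix.of fun j => ![(Real.sqrt (2 * (s i).re) : ℂ) * b i j,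
          (Real.sqrt (2 * (s i).re) : ℂ)
            * ((β i : ℂ) * (star (b i j) - α i * b i j))])
    (hBpsucc : ∀ i : Fin k,
      Bp i.succ = Bp i.castSucc + Ec * Zblk i * (Lblk i)ᴴ)
    -- the concatenated low-rank factor Z = [Z₁, …, Z_k]
    (Z : Matrix (Fin n) (Fin k × Fin 2) ℂ)
    (hZ : ∀ r p, Z r p = Zblk p.1 r p.2) :
    (∀ i r c, (Bp i r c).im = 0)
      ∧ (∀ r c, ((Z * Zᴴ) r c).im = 0)
      ∧ (Z * Zᴴ)ᴴ = Z * Zᴴ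
      ∧ Ac * (Z * Zᴴ) * Ecᵀ + Ec * (Z * Zᴴ) * Acᵀ + Bc * Bcᵀ
          = Bp (Fin.last k) * (Bp (Fin.last k))ᵀ := by
  have hAr : ∀ r c, starRingEnd ℂ (Ac r c) = Ac r c := by
    intro r c; simp [hAc, Matrix.map_apply, Complex.conj_ofReal]
  have hEr : ∀ r c, starRingEnd ℂ (Ec r c) = Ec r c := by
    intro r c; simp [hEc, Matrix.map_apply, Complex.conj_ofReal]
  have hBr0 : ∀ r c, starRingEnd ℂ (Bc r c) = Bc r c := by
    intro r c; simp [hBc, Matrix.map_apply, Complex.conj_ofReal]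
  -- the main induction
  have main : ∀ i : Fin (k+1),
      (∀ r c, starRingEnd ℂ (Bp i r c) = Bp i r c) ∧
      Ac * (∑ j ∈ Finset.univ.filter (fun j : Fin k => (j:ℕ) < (i:ℕ)),
          Zblk j * (Zblk j)ᴴ) * Ecᴴ
        + Ec * (∑ j ∈ Finset.univ.filter (fun j : Fin k => (j:ℕ) < (i:ℕ)),
          Zblk j * (Zblk j)ᴴ) * Acᴴ + Bc * Bcᴴ = Bp i * (Bp i)ᴴ := by
    intro i
    induction i using Fin.induction with
    | zero =>
        refine ⟨fun r c => by rw [hBp0]; exact hBr0 r c, ?_⟩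
        simp [hBp0]
    | succ i ih =>
        obtain ⟨ihreal, ihres⟩ := ih
        obtain ⟨hreal', hTreal, hres⟩ :=
          adi_step_full Ac Ec (Bp i.castSucc) (Bp i.succ) hAr hEr ihreal
            (s i) (hs i) (him i) (b i) (hb i) (hinv i) (y i) (hy i)
            (α i) (hα i) (β i) (hβ i) (Zblk i) (hZblk i) (Lblk i) (hLblk i)
            (hBpsucc i)
        refine ⟨hreal', ?_⟩
        have hfil : Finset.univ.filter (fun j : Fin k => (j:ℕ) < (i.succ:ℕ))
            = insert i (Finset.univ.filter
                (fun j : Fin k => (j:ℕ) < (i.castSucc:ℕ))) := by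
          ext j
          simp only [Finset.mem_filter, Finset.mem_insert, Finset.mem_univ, true_and,
            Fin.val_succ, Fin.coe_castSucc, Fin.ext_iff]
          omega
        rw [hfil, Finset.sum_insert (by simp)]
        rw [Matrix.mul_add, Matrix.add_mul, Matrix.mul_add, Matrix.add_mul, ← hres,
          ← ihres]
        abel
  -- Z Zᴴ as a sum of blocks
  have hZsum : Z * Zᴴ = ∑ i : Fin k, Zblk i * (Zblk i)ᴴ := by
    ext r c
    simp only [mul_apply, conjTranspose_apply, hZ, Matrix.sum_apply]
    exact Fintype.sum_prod_type _
  have hT : ∀ i : Fin k, ∀ r c,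
      starRingEnd ℂ ((Zblk i * (Zblk i)ᴴ) r c) = (Zblk i * (Zblk i)ᴴ) r c := by
    intro i
    exact (adi_step_full Ac Ec (Bp i.castSucc) (Bp i.succ) hAr hEr (main i.castSucc).1
      (s i) (hs i) (him i) (b i) (hb i) (hinv i) (y i) (hy i)
      (α i) (hα i) (β i) (hβ i) (Zblk i) (hZblk i) (Lblk i) (hLblk i)
      (hBpsucc i)).2.1
  have hZZreal : ∀ r c, starRingEnd ℂ ((Z * Zᴴ) r c) = (Z * Zᴴ) r c := by
    intro r c
    rw [hZsum, Matrix.sum_apply, map_sum]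
    exact Finset.sum_congr rfl fun i _ => hT i r c
  refine ⟨fun i r c => Complex.conj_eq_iff_im.mp ((main i).1 r c),
    fun r c => Complex.conj_eq_iff_im.mp (hZZreal r c),
    isHermitian_mul_conjTranspose_self Z, ?_⟩
  -- the residual factorization
  have hfull : Finset.univ.filter (fun j : Fin k => (j:ℕ) < ((Fin.last k : Fin (k+1)):ℕ))
      = Finset.univ := by
    ext j; simp [Fin.is_lt]
  have hres := (main (Fin.last k)).2
  rw [hfull] at hres
  have hET : Ecᵀ = Ecᴴ := by
    ext r c; rw [conjTranspose_apply, transpose_apply]; exact (hEr c r).symm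
  have hAT : Acᵀ = Acᴴ := by
    ext r c; rw [conjTranspose_apply, transpose_apply]; exact (hAr c r).symm
  have hBT : Bcᵀ = Bcᴴ := by
    ext r c; rw [conjTranspose_apply, transpose_apply]; exact (hBr0 c r).symm
  have hBpT : (Bp (Fin.last k))ᵀ = (Bp (Fin.last k))ᴴ := by
    ext r c
    rw [conjTranspose_apply, transpose_apply]
    exact ((main (Fin.last k)).1 c r).symm
  rw [hET, hAT, hBT, hBpT, hZsum]
  exact hres
end

section
/- Let A, E ∈ ℝ^{n×n}, B ∈ ℝ^{n×m}. For i = 1, …, k let s_i ∈ ℂ with Re(s_i) > 0 and Im(s_i) ≠ 0, let b_i ∈ ℂ^m with ‖b_i‖_2 = 1, and assume A − s_i E is invertible. Define B_{⊥,0} = B and, for i = 1, …, k: y_i = √(2 Re(s_i)) (A − s_i E)^{-1} B_{⊥,i−1} b_i, α_i = (b_i^H b̄_i)·Re(s_i)/s̄_i, β_i = 1/√(1 − α_i ᾱ_i), γ_i = √(1 + Re(α_i)), the real block Z_i = (√2/γ_i)·[Re(y_i), β_i(Im(α_i)·Re(y_i) + γ_i²·Im(y_i))] ∈ ℝ^{n×2},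 and B_{⊥,i} = B_{⊥,i−1} + (2/γ_i)·√(Re(s_i))·E Z_i [Re(b_i), β_i(Im(α_i)·Re(b_i) + γ_i²·Im(b_i))]ᵀ. Then all iterates Z_i and B_{⊥,i} are real, each Z_i Z_iᵀ equals the block Z_i^c (Z_i^c)^H produced by the complex formulation Z_i^c = [y_i, β_i(ȳ_i − α_i y_i)] (so the two formulations produce the same approximation and the same B_{⊥,i}), and the residual factorization A (Z Zᵀ) Eᵀ + E (Z Zᵀ) Aᵀ + B Bᵀ = B_{⊥,k} B_{⊥,k}ᵀ holds for Z = [Z_1, …, Z_k]. -/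
open Matrix Complex

section ADIHelpers

private lemma adi_core (a u v : ℂ) (β g : ℝ) (hg : g = 1 + a.re)
    (hg0 : g ≠ 0)
    (hB1 : β^2 * (1 - (a.re^2 + a.im^2)) = 1) :
    ((2/g * (u.re*v.re + (β*(a.im*u.re + g*u.im)) * (β*(a.im*v.re + g*v.im))) : ℝ) : ℂ)
      = u * (starRingEnd ℂ) v
        + ((β:ℂ)*((starRingEnd ℂ) u - a*u)) * (starRingEnd ℂ) ((β:ℂ)*((starRingEnd ℂ) v - a*v)) := by
  subst hg
  apply Complex.ext <;>
    simp only [Complex.ofReal_re, Complex.ofReal_im, Complex.mul_re, Complex.mul_im,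
      Complex.conj_re, Complex.conj_im, Complex.sub_re, Complex.sub_im,
      Complex.ofReal_mul, Complex.add_re, Complex.add_im] <;>
    field_simp
  · linear_combination ((1+a.re)*u.im*v.im - (1-a.re)*u.re*v.re) * hB1
  · linear_combination (1+a.re)*(u.im*v.re - u.re*v.im) * hB1

private lemma adi_core2 (a u v : ℂ) (β γ sr : ℝ)
    (hγ2 : γ^2 = 1 + a.re) (hγ0 : γ ≠ 0)
    (hB1 : β^2 * (1 - (a.re^2 + a.im^2)) = 1) :
    ((2/γ*Real.sqrt sr : ℝ):ℂ)
      * (((Real.sqrt 2/γ*u.re : ℝ):ℂ) * ((v.re : ℝ):ℂ)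
        + ((Real.sqrt 2/γ*(β*(a.im*u.re + γ^2*u.im)) : ℝ):ℂ)
          * ((β*(a.im*v.re + γ^2*v.im) : ℝ):ℂ))
    = u * (starRingEnd ℂ) (((Real.sqrt (2*sr) : ℝ):ℂ) * v)
      + ((β:ℂ)*((starRingEnd ℂ) u - a*u))
        * (starRingEnd ℂ) (((Real.sqrt (2*sr) : ℝ):ℂ) * ((β:ℂ)*((starRingEnd ℂ) v - a*v))) := by
  have hC : Real.sqrt (2*sr) = Real.sqrt 2 * Real.sqrt sr := Real.sqrt_mul (by norm_num) sr
  have hg0 : (γ:ℝ)^2 ≠ 0 := pow_ne_zero 2 hγ0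
  have hcore := adi_core a u v β (γ^2) hγ2 hg0 hB1
  calc ((2/γ*Real.sqrt sr : ℝ):ℂ)
      * (((Real.sqrt 2/γ*u.re : ℝ):ℂ) * ((v.re : ℝ):ℂ)
        + ((Real.sqrt 2/γ*(β*(a.im*u.re + γ^2*u.im)) : ℝ):ℂ)
          * ((β*(a.im*v.re + γ^2*v.im) : ℝ):ℂ))
      = ((Real.sqrt 2 * Real.sqrt sr : ℝ):ℂ)
        * ((2/(γ^2) * (u.re*v.re + (β*(a.im*u.re + γ^2*u.im)) * (β*(a.im*v.re + γ^2*v.im))) : ℝ) : ℂ) := by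
        push_cast
        field_simp
    _ = ((Real.sqrt 2 * Real.sqrt sr : ℝ):ℂ)
        * (u * (starRingEnd ℂ) v
          + ((β:ℂ)*((starRingEnd ℂ) u - a*u)) * (starRingEnd ℂ) ((β:ℂ)*((starRingEnd ℂ) v - a*v))) := by
        rw [hcore]
    _ = _ := by
        rw [hC]
        simp only [_root_.map_mul, Complex.conj_ofReal]
        push_cast
        ring

private lemma adi_core3 (a u v : ℂ) (β γ : ℝ)
    (hγ2 : γ^2 = 1 + a.re) (hγ0 : γ ≠ 0)
    (hB1 : β^2 * (1 - (a.re^2 + a.im^2)) = 1) :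
    ((Real.sqrt 2/γ*u.re : ℝ):ℂ) * ((Real.sqrt 2/γ*v.re : ℝ):ℂ)
      + ((Real.sqrt 2/γ*(β*(a.im*u.re + γ^2*u.im)) : ℝ):ℂ)
        * ((Real.sqrt 2/γ*(β*(a.im*v.re + γ^2*v.im)) : ℝ):ℂ)
    = u * (starRingEnd ℂ) v
      + ((β:ℂ)*((starRingEnd ℂ) u - a*u)) * (starRingEnd ℂ) ((β:ℂ)*((starRingEnd ℂ) v - a*v)) := by
  have hg0 : (γ:ℝ)^2 ≠ 0 := pow_ne_zero 2 hγ0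
  have hcore := adi_core a u v β (γ^2) hγ2 hg0 hB1
  have h2 : Real.sqrt 2 * Real.sqrt 2 = 2 := Real.mul_self_sqrt (by norm_num)
  rw [← hcore]
  have key : (Real.sqrt 2/γ*u.re) * (Real.sqrt 2/γ*v.re)
      + (Real.sqrt 2/γ*(β*(a.im*u.re + γ^2*u.im))) * (Real.sqrt 2/γ*(β*(a.im*v.re + γ^2*v.im)))
      = 2/(γ^2) * (u.re*v.re + (β*(a.im*u.re + γ^2*u.im)) * (β*(a.im*v.re + γ^2*v.im))) := by
    calc (Real.sqrt 2/γ*u.re) * (Real.sqrt 2/γ*v.re)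
        + (Real.sqrt 2/γ*(β*(a.im*u.re + γ^2*u.im))) * (Real.sqrt 2/γ*(β*(a.im*v.re + γ^2*v.im)))
        = (Real.sqrt 2 * Real.sqrt 2) * ((1/γ^2) * (u.re*v.re
            + (β*(a.im*u.re + γ^2*u.im)) * (β*(a.im*v.re + γ^2*v.im)))) := by
          have h2' : Real.sqrt 2 ^ 2 = 2 := Real.sq_sqrt (by norm_num)
          field_simp
      _ = 2 * ((1/γ^2) * (u.re*v.re
            + (β*(a.im*u.re + γ^2*u.im)) * (β*(a.im*v.re + γ^2*v.im)))) := by rw [h2]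
      _ = _ := by ring
  exact_mod_cast key

private lemma adi_telescope {M : Type*} [AddCommGroup M] (k : ℕ) (f : Fin (k+1) → M) :
    ∑ i : Fin k, (f i.succ - f i.castSucc) = f (Fin.last k) - f 0 := by
  induction k with
  | zero => simp
  | succ k ih =>
    rw [Fin.sum_univ_castSucc]
    have := ih (fun j => f j.castSucc)
    simp only [Fin.succ_castSucc] at this ⊢
    rw [this]
    simp only [Fin.castSucc_zero]
    abel

private lemma adi_stepAlg {R : Type*} [CommRing R] [StarRing R] {n m p : ℕ}
    (W : Matrix (Fin n) (Fin m) R) (Eg Ag : Matrix (Fin n) (Fin n) R)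
    (Zg D : Matrix (Fin n) (Fin p) R) (Lg : Matrix (Fin m) (Fin p) R)
    (Mg : Matrix (Fin p) (Fin p) R)
    (h1 : W * Lg = Ag * Zg - Eg * D)
    (h2 : Lgᴴ * Lg = Mg)
    (h3 : Zg * Dᴴ + D * Zgᴴ = Zg * Mg * Zgᴴ) :
    (W + Eg * Zg * Lgᴴ) * (W + Eg * Zg * Lgᴴ)ᴴ
      = W * Wᴴ + (Ag * (Zg * Zgᴴ) * Egᴴ + Eg * (Zg * Zgᴴ) * Agᴴ) := by
  have h1t : Lgᴴ * Wᴴ = Zgᴴ * Agᴴ - Dᴴ * Egᴴ := by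
    calc Lgᴴ * Wᴴ = (W * Lg)ᴴ := by rw [conjTranspose_mul]
    _ = (Ag * Zg)ᴴ - (Eg * D)ᴴ := by rw [h1, conjTranspose_sub]
    _ = Zgᴴ * Agᴴ - Dᴴ * Egᴴ := by rw [conjTranspose_mul, conjTranspose_mul]
  have e1 : Eg * Zg * Lgᴴ * Wᴴ = Eg * Zg * (Zgᴴ * Agᴴ) - Eg * Zg * (Dᴴ * Egᴴ) := by
    rw [Matrix.mul_assoc (Eg * Zg), h1t, Matrix.mul_sub]
  have e2 : W * (Eg * Zg * Lgᴴ)ᴴ = Ag * Zg * (Zgᴴ * Egᴴ) - Eg * D * (Zgᴴ * Egᴴ) := by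
    simp only [conjTranspose_mul, conjTranspose_conjTranspose]
    rw [← Matrix.mul_assoc W Lg, h1, Matrix.sub_mul]
  have e3 : (Eg * Zg * Lgᴴ) * (Eg * Zg * Lgᴴ)ᴴ
      = Eg * (Zg * Dᴴ) * Egᴴ + Eg * (D * Zgᴴ) * Egᴴ := by
    have h4 : (Eg * Zg * Lgᴴ) * (Eg * Zg * Lgᴴ)ᴴ = Eg * (Zg * Mg * Zgᴴ) * Egᴴ := by
      simp only [conjTranspose_mul, conjTranspose_conjTranspose, ← h2]
      simp only [Matrix.mul_assoc]
    rw [h4, ← h3, Matrix.mul_add, Matrix.add_mul]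
  have expand : (W + Eg*Zg*Lgᴴ) * (W + Eg*Zg*Lgᴴ)ᴴ
      = W*Wᴴ + (Eg*Zg*Lgᴴ*Wᴴ + W*(Eg*Zg*Lgᴴ)ᴴ + (Eg*Zg*Lgᴴ)*(Eg*Zg*Lgᴴ)ᴴ) := by
    rw [conjTranspose_add, Matrix.add_mul, Matrix.mul_add, Matrix.mul_add]
    abel
  rw [expand, e1, e2, e3]
  simp only [Matrix.mul_assoc]
  abel

private lemma adi_F3lem {n : ℕ} (yv : Fin n → ℂ) (a s : ℂ) (β : ℝ)
    (Zc D : Matrix (Fin n) (Fin 2) ℂ) (Mg : Matrix (Fin 2) (Fin 2) ℂ)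
    (hZc : Zc = Matrix.of fun r => ![yv r, (β:ℂ)*((starRingEnd ℂ) (yv r) - a * yv r)])
    (hD : D = Matrix.of fun r => ![s * yv r,
      (β:ℂ)*((starRingEnd ℂ) s * (starRingEnd ℂ) (yv r) - a * s * yv r)])
    (hM : Mg = !![s + (starRingEnd ℂ) s, -(β:ℂ)*a*(s - (starRingEnd ℂ) s);
      (β:ℂ)*(starRingEnd ℂ) a*(s - (starRingEnd ℂ) s), s + (starRingEnd ℂ) s]) :
    Zc * Dᴴ + D * Zcᴴ = Zc * Mg * Zcᴴ := by
  subst hZc hD hM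
  ext r r₂
  simp only [Matrix.add_apply, Matrix.mul_apply, Matrix.conjTranspose_apply,
    Fin.sum_univ_two, Matrix.of_apply, Matrix.cons_val_zero, Matrix.cons_val_one,
    Matrix.head_cons, Matrix.cons_val', Matrix.head_fin_const, Matrix.empty_val',
    Matrix.cons_val_fin_one, ← starRingEnd_apply]
  simp only [_root_.map_mul, map_sub, map_add, Complex.conj_conj, Complex.conj_ofReal]
  ring

private lemma adi_F2lem {m : ℕ} (b : Fin m → ℂ) (s a : ℂ) (β : ℝ) (c : ℝ)
    (Lc : Matrix (Fin m) (Fin 2) ℂ)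
    (hre2 : ((s.re : ℂ)) * 2 = s + (starRingEnd ℂ) s)
    (hcsq : (c:ℂ) * (c:ℂ) = s + (starRingEnd ℂ) s)
    (S1 : ∑ j, (starRingEnd ℂ) (b j) * b j = 1)
    (S2 : (∑ j, ((starRingEnd ℂ) (b j)) ^ 2) * (s.re : ℂ) = a * (starRingEnd ℂ) s)
    (S3 : (∑ j, (b j) ^ 2) * (s.re : ℂ) = (starRingEnd ℂ) a * s)
    (hβ2c : (β:ℂ)^2 * (1 - a * (starRingEnd ℂ) a) = 1)
    (hLc : Lc = Matrix.of fun j => ![(c:ℂ) * b j,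
        (c:ℂ) * ((β:ℂ) * ((starRingEnd ℂ) (b j) - a * b j))]) :
    Lcᴴ * Lc = !![s + (starRingEnd ℂ) s, -(β:ℂ)*a*(s - (starRingEnd ℂ) s);
      (β:ℂ)*(starRingEnd ℂ) a*(s - (starRingEnd ℂ) s), s + (starRingEnd ℂ) s] := by
  subst hLc
  set P1 := ∑ j, (starRingEnd ℂ) (b j) * b j with hP1
  set P2 := ∑ j, ((starRingEnd ℂ) (b j)) ^ 2 with hP2
  set P3 := ∑ j, (b j) ^ 2 with hP3
  ext p p'
  fin_cases p <;> fin_cases p' <;>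
    simp only [Matrix.mul_apply, Matrix.conjTranspose_apply, Matrix.of_apply,
      Matrix.cons_val_zero, Matrix.cons_val_one, Matrix.head_cons, Matrix.cons_val',
      Matrix.empty_val', Matrix.cons_val_fin_one, Fin.mk_zero, Fin.mk_one, Matrix.vecHead,
      ← starRingEnd_apply, _root_.map_mul, map_sub, Complex.conj_conj, Complex.conj_ofReal]
  · have step : ∑ x, (c:ℂ) * (starRingEnd ℂ) (b x) * ((c:ℂ) * b x)
        = ((c:ℂ)*(c:ℂ)) * P1 := by
      rw [hP1, Finset.mul_sum]
      exact Finset.sum_congr rfl fun x _ => by ring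
    rw [step]
    linear_combination hcsq + ((c:ℂ)*(c:ℂ)) * S1
  · have step : ∑ x, (c:ℂ) * (starRingEnd ℂ) (b x) * ((c:ℂ) * ((β:ℂ) * ((starRingEnd ℂ) (b x) - a * b x)))
        = ((c:ℂ)*(c:ℂ))*(β:ℂ)*P2 - ((c:ℂ)*(c:ℂ))*(β:ℂ)*a*P1 := by
      rw [hP1, hP2, Finset.mul_sum, Finset.mul_sum, ← Finset.sum_sub_distrib]
      exact Finset.sum_congr rfl fun x _ => by ring
    rw [step]
    linear_combination ((β:ℂ)*P2 - (β:ℂ)*a*P1) * hcsq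
      - (s + (starRingEnd ℂ) s)*(β:ℂ)*a*S1 - (β:ℂ)*P2*hre2 + 2*(β:ℂ)*S2
  · have step : ∑ x, (c:ℂ) * ((β:ℂ) * (b x - (starRingEnd ℂ) a * (starRingEnd ℂ) (b x))) * ((c:ℂ) * b x)
        = ((c:ℂ)*(c:ℂ))*(β:ℂ)*P3 - ((c:ℂ)*(c:ℂ))*(β:ℂ)*(starRingEnd ℂ) a*P1 := by
      rw [hP1, hP3, Finset.mul_sum, Finset.mul_sum, ← Finset.sum_sub_distrib]
      exact Finset.sum_congr rfl fun x _ => by ring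
    rw [step]
    linear_combination ((β:ℂ)*P3 - (β:ℂ)*(starRingEnd ℂ) a*P1) * hcsq
      - (s + (starRingEnd ℂ) s)*(β:ℂ)*(starRingEnd ℂ) a*S1 - (β:ℂ)*P3*hre2 + 2*(β:ℂ)*S3
  · have step : ∑ x, (c:ℂ) * ((β:ℂ) * (b x - (starRingEnd ℂ) a * (starRingEnd ℂ) (b x)))
          * ((c:ℂ) * ((β:ℂ) * ((starRingEnd ℂ) (b x) - a * b x)))
        = ((c:ℂ)*(c:ℂ))*(β:ℂ)^2*(1 + a*(starRingEnd ℂ) a)*P1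
          - ((c:ℂ)*(c:ℂ))*(β:ℂ)^2*a*P3 - ((c:ℂ)*(c:ℂ))*(β:ℂ)^2*(starRingEnd ℂ) a*P2 := by
      rw [hP1, hP2, hP3, Finset.mul_sum, Finset.mul_sum, Finset.mul_sum,
        ← Finset.sum_sub_distrib, ← Finset.sum_sub_distrib]
      exact Finset.sum_congr rfl fun x _ => by ring
    rw [step]
    linear_combination ((c:ℂ)*(c:ℂ))*(β:ℂ)^2*(1 + a*(starRingEnd ℂ) a)*S1
      + ((β:ℂ)^2*(1 + a*(starRingEnd ℂ) a) - (β:ℂ)^2*a*P3 - (β:ℂ)^2*(starRingEnd ℂ) a*P2) * hcsq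
      + ((β:ℂ)^2*a*P3 + (β:ℂ)^2*(starRingEnd ℂ) a*P2) * hre2
      - 2*(β:ℂ)^2*a*S3 - 2*(β:ℂ)^2*(starRingEnd ℂ) a*S2
      + (s + (starRingEnd ℂ) s) * hβ2c

private lemma adi_F1lem {n m : ℕ} (W : Matrix (Fin n) (Fin m) ℂ) (Ac Ec : Matrix (Fin n) (Fin n) ℂ)
    (yv : Fin n → ℂ) (b : Fin m → ℂ) (s a : ℂ) (β c : ℝ)
    (Zc : Matrix (Fin n) (Fin 2) ℂ) (Lc : Matrix (Fin m) (Fin 2) ℂ)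
    (D : Matrix (Fin n) (Fin 2) ℂ)
    (hZc : Zc = Matrix.of fun r => ![yv r, (β:ℂ)*((starRingEnd ℂ) (yv r) - a * yv r)])
    (hLc : Lc = Matrix.of fun j => ![(c:ℂ) * b j,
        (c:ℂ) * ((β:ℂ) * ((starRingEnd ℂ) (b j) - a * b j))])
    (hD : D = Matrix.of fun r => ![s * yv r,
      (β:ℂ)*((starRingEnd ℂ) s * (starRingEnd ℂ) (yv r) - a * s * yv r)])
    (R1 : ∀ r, (∑ q, Ac r q * yv q) - s * ∑ q, Ec r q * yv q
        = (c:ℂ) * ∑ j, W r j * b j)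
    (R1c : ∀ r, (∑ q, Ac r q * (starRingEnd ℂ) (yv q))
          - (starRingEnd ℂ) s * ∑ q, Ec r q * (starRingEnd ℂ) (yv q)
        = (c:ℂ) * ∑ j, W r j * (starRingEnd ℂ) (b j)) :
    W * Lc = Ac * Zc - Ec * D := by
  subst hZc hLc hD
  ext r p
  fin_cases p <;>
    simp only [Matrix.mul_apply, Matrix.sub_apply, Matrix.of_apply,
      Matrix.cons_val_zero, Matrix.cons_val_one, Matrix.head_cons, Matrix.cons_val',
      Matrix.empty_val', Matrix.cons_val_fin_one, Fin.mk_zero, Fin.mk_one]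
  · have s1 : ∑ j, W r j * ((c:ℂ) * b j) = (c:ℂ) * ∑ j, W r j * b j := by
      rw [Finset.mul_sum]; exact Finset.sum_congr rfl fun j _ => by ring
    have s2 : ∑ q, Ec r q * (s * yv q) = s * ∑ q, Ec r q * yv q := by
      rw [Finset.mul_sum]; exact Finset.sum_congr rfl fun q _ => by ring
    rw [s1, s2]
    linear_combination -R1 r
  · have s1 : ∑ j, W r j * ((c:ℂ) * ((β:ℂ) * ((starRingEnd ℂ) (b j) - a * b j)))
        = ((c:ℂ)*(β:ℂ)) * (∑ j, W r j * (starRingEnd ℂ) (b j))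
          - ((c:ℂ)*(β:ℂ)*a) * ∑ j, W r j * b j := by
      rw [Finset.mul_sum, Finset.mul_sum, ← Finset.sum_sub_distrib]
      exact Finset.sum_congr rfl fun j _ => by ring
    have s2 : ∑ q, Ac r q * ((β:ℂ) * ((starRingEnd ℂ) (yv q) - a * yv q))
        = (β:ℂ) * (∑ q, Ac r q * (starRingEnd ℂ) (yv q))
          - ((β:ℂ)*a) * ∑ q, Ac r q * yv q := by
      rw [Finset.mul_sum, Finset.mul_sum, ← Finset.sum_sub_distrib]
      exact Finset.sum_congr rfl fun q _ => by ring
    have s3 : ∑ q, Ec r q * ((β:ℂ) * ((starRingEnd ℂ) s * (starRingEnd ℂ) (yv q) - a * s * yv q))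
        = ((β:ℂ)*(starRingEnd ℂ) s) * (∑ q, Ec r q * (starRingEnd ℂ) (yv q))
          - ((β:ℂ)*a*s) * ∑ q, Ec r q * yv q := by
      rw [Finset.mul_sum, Finset.mul_sum, ← Finset.sum_sub_distrib]
      exact Finset.sum_congr rfl fun q _ => by ring
    rw [s1, s2, s3]
    linear_combination (-(β:ℂ))*(R1c r) + ((β:ℂ)*a)*(R1 r)

private lemma adi_mapRC_inj {p q : Type*} {M N : Matrix p q ℝ}
    (h : M.map Complex.ofReal = N.map Complex.ofReal) : M = N := by
  ext i j
  have := congrFun (congrFun h i) j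
  simpa [Matrix.map_apply] using this

private lemma adi_mapRC_mul {p q r : Type*} [Fintype q] (M : Matrix p q ℝ) (N : Matrix q r ℝ) :
    (M * N).map Complex.ofReal = M.map Complex.ofReal * N.map Complex.ofReal := by
  ext i j
  simp [Matrix.map_apply, Matrix.mul_apply]

private lemma adi_mapRC_conjT {p q : Type*} (M : Matrix p q ℝ) :
    (M.map Complex.ofReal)ᴴ = Mᵀ.map Complex.ofReal := by
  ext i j
  simp [Matrix.map_apply, Matrix.conjTranspose_apply, Complex.conj_ofReal]

private lemma adi_mapRC_add {p q : Type*} (M N : Matrix p q ℝ) :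
    (M + N).map Complex.ofReal = M.map Complex.ofReal + N.map Complex.ofReal := by
  ext i j; simp [Matrix.map_apply]

private lemma adi_BmapStep {n m : ℕ} (E : Matrix (Fin n) (Fin n) ℝ)
    (Zr : Matrix (Fin n) (Fin 2) ℝ) (Mr : Matrix (Fin m) (Fin 2) ℝ)
    (Zc : Matrix (Fin n) (Fin 2) ℂ) (Lc : Matrix (Fin m) (Fin 2) ℂ) (rr : ℝ)
    (key : ∀ q j, ((rr:ℝ):ℂ) * (((Zr q 0 : ℝ):ℂ) * ((Mr j 0 : ℝ):ℂ)
          + ((Zr q 1 : ℝ):ℂ) * ((Mr j 1 : ℝ):ℂ))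
        = Zc q 0 * (starRingEnd ℂ) (Lc j 0) + Zc q 1 * (starRingEnd ℂ) (Lc j 1)) :
    (rr • (E * Zr * Mrᵀ)).map Complex.ofReal = (E.map Complex.ofReal) * Zc * Lcᴴ := by
  ext r j
  simp only [Matrix.map_apply, Matrix.smul_apply, smul_eq_mul, Matrix.mul_apply,
    Matrix.transpose_apply, Matrix.conjTranspose_apply, ← starRingEnd_apply]
  push_cast
  calc (rr:ℂ) * ∑ p, (∑ q, ((E r q : ℝ):ℂ) * ((Zr q p : ℝ):ℂ)) * ((Mr j p : ℝ):ℂ)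
      = ∑ p, ∑ q, ((E r q : ℝ):ℂ) * ((rr:ℂ) * (((Zr q p : ℝ):ℂ) * ((Mr j p : ℝ):ℂ))) := by
        rw [Finset.mul_sum]
        refine Finset.sum_congr rfl fun p _ => ?_
        rw [Finset.sum_mul, Finset.mul_sum]
        exact Finset.sum_congr rfl fun q _ => by ring
    _ = ∑ q, ∑ p, ((E r q : ℝ):ℂ) * ((rr:ℂ) * (((Zr q p : ℝ):ℂ) * ((Mr j p : ℝ):ℂ))) :=
        Finset.sum_comm
    _ = ∑ q, ((E r q : ℝ):ℂ) * ((rr:ℂ) * ∑ p, ((Zr q p : ℝ):ℂ) * ((Mr j p : ℝ):ℂ)) := by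
        refine Finset.sum_congr rfl fun q _ => ?_
        rw [Finset.mul_sum, Finset.mul_sum]
    _ = ∑ q, ((E r q : ℝ):ℂ) * (Zc q 0 * (starRingEnd ℂ) (Lc j 0)
          + Zc q 1 * (starRingEnd ℂ) (Lc j 1)) := by
        refine Finset.sum_congr rfl fun q _ => ?_
        rw [show (rr:ℂ) * ∑ p, ((Zr q p : ℝ):ℂ) * ((Mr j p : ℝ):ℂ)
            = (rr:ℂ) * (((Zr q 0 : ℝ):ℂ) * ((Mr j 0 : ℝ):ℂ)
              + ((Zr q 1 : ℝ):ℂ) * ((Mr j 1 : ℝ):ℂ)) from by rw [Fin.sum_univ_two]]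
        rw [key q j]
    _ = ∑ p, (∑ q, ((E r q : ℝ):ℂ) * Zc q p) * (starRingEnd ℂ) (Lc j p) := by
        rw [Fin.sum_univ_two]
        rw [Finset.sum_mul, Finset.sum_mul, ← Finset.sum_add_distrib]
        refine Finset.sum_congr rfl fun q _ => by ring

end ADIHelpers

/-- Real-arithmetic formulation of the tangential low-rank ADI iteration for
complex conjugated shift pairs (Theorem 6): the real iterates `Zr i` and
`Bp i` reproduce the complex formulation (`Zr i (Zr i)ᵀ = Zc i (Zc i)ᴴ` and
`Bp i = Bpc i`), and the concatenated real low-rank factor satisfies the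
residual factorization. -/
theorem tangential_adi_complex_shifts_real_arithmetic
    {n m k : ℕ}
    (A E : Matrix (Fin n) (Fin n) ℝ) (B : Matrix (Fin n) (Fin m) ℝ)
    (Ac Ec : Matrix (Fin n) (Fin n) ℂ) (Bc : Matrix (Fin n) (Fin m) ℂ)
    (hAc : Ac = A.map Complex.ofReal) (hEc : Ec = E.map Complex.ofReal)
    (hBc : Bc = B.map Complex.ofReal)
    (s : Fin k → ℂ) (hs : ∀ i, 0 < (s i).re) (him : ∀ i, (s i).im ≠ 0)
    (b : Fin k → Fin m → ℂ) (hb : ∀ i, ∑ j, Complex.normSq (b i j) = 1)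
    (hinv : ∀ i, IsUnit (Ac - s i • Ec).det)
    -- αᵢ = (bᵢᴴ b̄ᵢ)·Re(sᵢ)/s̄ᵢ ;  βᵢ = 1/√(1 − αᵢ ᾱᵢ) ;  γᵢ = √(1 + Re αᵢ)
    (α : Fin k → ℂ) (β γ : Fin k → ℝ)
    (hα : ∀ i, α i = (∑ j, (starRingEnd ℂ (b i j)) ^ 2)
        * (((s i).re : ℂ) / star (s i)))
    (hβ : ∀ i, β i = (Real.sqrt (1 - Complex.normSq (α i)))⁻¹)
    (hγ : ∀ i, γ i = Real.sqrt (1 + (α i).re))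
    -- real-arithmetic iteration
    (y : Fin k → Fin n → ℂ)
    (Zr : Fin k → Matrix (Fin n) (Fin 2) ℝ)
    (Bp : Fin (k + 1) → Matrix (Fin n) (Fin m) ℝ)
    (hBp0 : Bp 0 = B)
    (hy : ∀ i, y i = (Real.sqrt (2 * (s i).re) : ℂ) •
        ((Ac - s i • Ec)⁻¹ *ᵥ ((Bp i.castSucc).map Complex.ofReal *ᵥ b i)))
    (hZr : ∀ i, Zr i = Matrix.of fun r =>
      ![(Real.sqrt 2 / γ i) * (y i r).re,
        (Real.sqrt 2 / γ i)
          * (β i * ((α i).im * (y i r).re + (γ i) ^ 2 * (y i r).im))])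
    (hBpsucc : ∀ i : Fin k,
      Bp i.succ = Bp i.castSucc
        + ((2 / γ i) * Real.sqrt (s i).re) •
            (E * Zr i * (Matrix.of fun (j : Fin m) =>
              ![(b i j).re,
                β i * ((α i).im * (b i j).re + (γ i) ^ 2 * (b i j).im)])ᵀ))
    -- complex formulation (Theorem 5)
    (yc : Fin k → Fin n → ℂ)
    (Zc : Fin k → Matrix (Fin n) (Fin 2) ℂ)
    (Lc : Fin k → Matrix (Fin m) (Fin 2) ℂ)
    (Bpc : Fin (k + 1) → Matrix (Fin n) (Fin m) ℂ)
    (hBpc0 : Bpc 0 = Bc)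
    (hyc : ∀ i, yc i = (Real.sqrt (2 * (s i).re) : ℂ) •
        ((Ac - s i • Ec)⁻¹ *ᵥ (Bpc i.castSucc *ᵥ b i)))
    (hZc : ∀ i, Zc i
      = Matrix.of fun r => ![yc i r, (β i : ℂ) * (star (yc i r) - α i * yc i r)])
    (hLc : ∀ i, Lc i
      = Matrix.of fun j => ![(Real.sqrt (2 * (s i).re) : ℂ) * b i j,
          (Real.sqrt (2 * (s i).re) : ℂ)
            * ((β i : ℂ) * (star (b i j) - α i * b i j))])
    (hBpcsucc : ∀ i : Fin k,
      Bpc i.succ = Bpc i.castSucc + Ec * Zc i * (Lc i)ᴴ)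
    -- the concatenated real low-rank factor Z = [Z₁, …, Z_k]
    (Z : Matrix (Fin n) (Fin k × Fin 2) ℝ)
    (hZ : ∀ r p, Z r p = Zr p.1 r p.2) :
    (∀ i : Fin k,
        ((Zr i).map Complex.ofReal) * ((Zr i).map Complex.ofReal)ᴴ
          = Zc i * (Zc i)ᴴ)
      ∧ (∀ i : Fin (k + 1), (Bp i).map Complex.ofReal = Bpc i)
      ∧ A * (Z * Zᵀ) * Eᵀ + E * (Z * Zᵀ) * Aᵀ + B * Bᵀ
          = Bp (Fin.last k) * (Bp (Fin.last k))ᵀ := by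
  subst hAc hEc hBc
  -- basic scalar facts
  have hsre : ∀ i, ((s i).re:ℝ) ≠ 0 := fun i => (hs i).ne'
  have hsne : ∀ i, s i ≠ 0 := by
    intro i hcon
    exact hsre i (by rw [hcon]; simp)
  have hnsq : ∀ i, Complex.normSq (α i) < 1 := by
    intro i
    set T := ∑ j, (starRingEnd ℂ (b i j)) ^ 2 with hT
    have habsT : ‖T‖ ≤ 1 := by
      calc ‖T‖ ≤ ∑ j, ‖(starRingEnd ℂ (b i j))^2‖ :=
            norm_sum_le _ _
      _ = ∑ j, Complex.normSq (b i j) := by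
          refine Finset.sum_congr rfl fun j _ => ?_
          rw [norm_pow, Complex.norm_conj, Complex.sq_norm]
      _ = 1 := hb i
    have hnT : Complex.normSq T ≤ 1 := by
      rw [← Complex.sq_norm]
      nlinarith [norm_nonneg T]
    have hnspos : 0 < Complex.normSq (s i) := by
      rw [Complex.normSq_apply]
      nlinarith [sq_nonneg (s i).im, sq_nonneg (s i).re, hs i]
    have hfrac : (s i).re ^ 2 < Complex.normSq (s i) := by
      rw [Complex.normSq_apply]
      have : (s i).im ^ 2 > 0 := by
        have := him i; positivity
      nlinarith
    have heq : Complex.normSq (α i)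
        = Complex.normSq T * ((s i).re^2 / Complex.normSq (s i)) := by
      rw [hα i, Complex.normSq_mul, Complex.normSq_div, Complex.normSq_ofReal]
      rw [show star (s i) = (starRingEnd ℂ) (s i) from rfl, Complex.normSq_conj]
      ring_nf
      rw [hT]
      ring
    rw [heq]
    have h1 : (s i).re^2 / Complex.normSq (s i) < 1 := by
      rw [div_lt_one hnspos]; exact hfrac
    have h2 : (0:ℝ) ≤ (s i).re^2 / Complex.normSq (s i) := by positivity
    nlinarith [Complex.normSq_nonneg T]
  have hnpos : ∀ i, (0:ℝ) < 1 - Complex.normSq (α i) := fun i => by linarith [hnsq i]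
  have hrebd : ∀ i, (α i).re^2 + (α i).im^2 = Complex.normSq (α i) := by
    intro i; rw [Complex.normSq_apply]; ring
  have hB1 : ∀ i, (β i)^2 * (1 - ((α i).re^2 + (α i).im^2)) = 1 := by
    intro i
    have hβ2 : (β i)^2 = (1 - Complex.normSq (α i))⁻¹ := by
      rw [hβ i, inv_pow, Real.sq_sqrt (hnpos i).le]
    rw [hβ2, hrebd i]
    exact inv_mul_cancel₀ (hnpos i).ne'
  have hrelt : ∀ i, -1 < (α i).re := by
    intro i
    nlinarith [hnsq i, hrebd i, sq_nonneg ((α i).im)]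
  have hγ2 : ∀ i, (γ i)^2 = 1 + (α i).re := by
    intro i
    rw [hγ i, Real.sq_sqrt (by linarith [hrelt i])]
  have hγ0 : ∀ i, γ i ≠ 0 := by
    intro i
    rw [hγ i]
    have h1 : (0:ℝ) < 1 + (α i).re := by linarith [hrelt i]
    exact Real.sqrt_ne_zero'.mpr h1
  have hβ2c : ∀ i, ((β i:ℂ))^2 * (1 - α i * (starRingEnd ℂ) (α i)) = 1 := by
    intro i
    have h := hB1 i
    rw [hrebd i] at h
    rw [Complex.mul_conj]
    exact_mod_cast h
  have hre2 : ∀ i, (((s i).re:ℂ)) * 2 = s i + (starRingEnd ℂ) (s i) := by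
    intro i
    rw [Complex.add_conj]
    push_cast
    ring
  have hcsq : ∀ i, ((Real.sqrt (2*(s i).re) : ℝ):ℂ) * ((Real.sqrt (2*(s i).re) : ℝ):ℂ)
      = s i + (starRingEnd ℂ) (s i) := by
    intro i
    have h2 : ((2*(s i).re : ℝ):ℂ) = (((s i).re:ℝ):ℂ)*2 := by push_cast; ring
    rw [← Complex.ofReal_mul, Real.mul_self_sqrt (by have := hs i; linarith), h2, hre2 i]
  -- sum facts
  have S1 : ∀ i, ∑ j, (starRingEnd ℂ) (b i j) * b i j = 1 := by
    intro i
    have hj : ∀ j, (starRingEnd ℂ) (b i j) * b i j = ((Complex.normSq (b i j) : ℝ) : ℂ) := by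
      intro j; rw [← Complex.normSq_eq_conj_mul_self]
    rw [Finset.sum_congr rfl (fun j _ => hj j), ← Complex.ofReal_sum, hb i]
    norm_num
  have S2 : ∀ i, (∑ j, ((starRingEnd ℂ) (b i j)) ^ 2) * ((s i).re : ℂ)
      = α i * (starRingEnd ℂ) (s i) := by
    intro i
    have hcs : (starRingEnd ℂ) (s i) ≠ 0 := by simpa using hsne i
    rw [hα i, show star (s i) = (starRingEnd ℂ) (s i) from rfl]
    field_simp
  have S3 : ∀ i, (∑ j, (b i j) ^ 2) * ((s i).re : ℂ)
      = (starRingEnd ℂ) (α i) * s i := by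
    intro i
    have h := congrArg (starRingEnd ℂ) (S2 i)
    simpa only [_root_.map_mul, map_sum, map_pow, Complex.conj_conj,
      Complex.conj_ofReal] using h
  -- the complex-formulation one-step relation
  have R1 : ∀ i, (A.map Complex.ofReal - s i • E.map Complex.ofReal) *ᵥ yc i
      = ((Real.sqrt (2*(s i).re) : ℝ):ℂ) • (Bpc i.castSucc *ᵥ b i) := by
    intro i
    rw [hyc i, Matrix.mulVec_smul, Matrix.mulVec_mulVec,
      Matrix.mul_nonsing_inv _ (hinv i), Matrix.one_mulVec]
  -- part 2 : the real iterates map to the complex ones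
  have Bmap : ∀ i : Fin (k+1), (Bp i).map Complex.ofReal = Bpc i := by
    intro i
    induction i using Fin.induction with
    | zero => rw [hBp0, hBpc0]
    | succ i ih =>
      have hyy : y i = yc i := by rw [hy i, hyc i, ih]
      rw [hBpsucc i, hBpcsucc i, adi_mapRC_add, ih]
      congr 1
      refine adi_BmapStep E (Zr i) _ (Zc i) (Lc i) _ ?_
      intro q j
      rw [hZr i, hZc i, hLc i]
      simp only [Matrix.of_apply, Matrix.cons_val_zero, Matrix.cons_val_one,
        Matrix.head_cons, ← starRingEnd_apply, hyy]
      exact adi_core2 (α i) (yc i q) (b i j) (β i) (γ i) ((s i).re)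
        (hγ2 i) (hγ0 i) (hB1 i)
  -- part 1
  have part1 : ∀ i : Fin k,
      ((Zr i).map Complex.ofReal) * ((Zr i).map Complex.ofReal)ᴴ = Zc i * (Zc i)ᴴ := by
    intro i
    have hyy : y i = yc i := by rw [hy i, hyc i, Bmap i.castSucc]
    ext r r₂
    rw [hZr i, hZc i]
    simp only [Matrix.mul_apply, Matrix.map_apply, Matrix.conjTranspose_apply,
      Fin.sum_univ_two, Matrix.of_apply, Matrix.cons_val_zero, Matrix.cons_val_one,
      Matrix.head_cons, ← starRingEnd_apply, Complex.conj_ofReal, hyy]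
    exact adi_core3 (α i) (yc i r) (yc i r₂) (β i) (γ i) (hγ2 i) (hγ0 i) (hB1 i)
  -- residual step in the complex formulation
  have R1e : ∀ i r, (∑ q, (A.map Complex.ofReal) r q * yc i q)
        - s i * ∑ q, (E.map Complex.ofReal) r q * yc i q
      = ((Real.sqrt (2*(s i).re) : ℝ):ℂ)
        * ∑ j, ((Bp i.castSucc).map Complex.ofReal) r j * b i j := by
    intro i r
    have h := congrFun (R1 i) r
    simp only [Matrix.mulVec, dotProduct, Matrix.sub_apply, Matrix.smul_apply,
      smul_eq_mul, Pi.smul_apply, Bmap i.castSucc] at h ⊢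
    rw [← h, Finset.mul_sum, ← Finset.sum_sub_distrib]
    exact Finset.sum_congr rfl fun q _ => by ring
  have R1c : ∀ i r, (∑ q, (A.map Complex.ofReal) r q * (starRingEnd ℂ) (yc i q))
        - (starRingEnd ℂ) (s i) * ∑ q, (E.map Complex.ofReal) r q * (starRingEnd ℂ) (yc i q)
      = ((Real.sqrt (2*(s i).re) : ℝ):ℂ)
        * ∑ j, ((Bp i.castSucc).map Complex.ofReal) r j * (starRingEnd ℂ) (b i j) := by
    intro i r
    have h := congrArg (starRingEnd ℂ) (R1e i r)
    simpa only [map_sub, _root_.map_mul, map_sum, Complex.conj_ofReal,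
      Matrix.map_apply] using h
  -- abbreviations for the auxiliary matrices
  set Dm : Fin k → Matrix (Fin n) (Fin 2) ℂ := fun i => Matrix.of fun r =>
    ![s i * yc i r, (β i:ℂ)*((starRingEnd ℂ) (s i) * (starRingEnd ℂ) (yc i r)
      - α i * s i * yc i r)] with hDm
  set Mg : Fin k → Matrix (Fin 2) (Fin 2) ℂ := fun i =>
    !![s i + (starRingEnd ℂ) (s i), -(β i:ℂ)*(α i)*(s i - (starRingEnd ℂ) (s i));
      (β i:ℂ)*(starRingEnd ℂ) (α i)*(s i - (starRingEnd ℂ) (s i)),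
      s i + (starRingEnd ℂ) (s i)] with hMg
  have hZc' : ∀ i, Zc i = Matrix.of fun r =>
      ![yc i r, (β i:ℂ)*((starRingEnd ℂ) (yc i r) - α i * yc i r)] := by
    intro i; rw [hZc i]; simp only [← starRingEnd_apply]
  have hLc' : ∀ i, Lc i = Matrix.of fun j =>
      ![((Real.sqrt (2*(s i).re) : ℝ):ℂ) * b i j,
        ((Real.sqrt (2*(s i).re) : ℝ):ℂ) * ((β i:ℂ)*((starRingEnd ℂ) (b i j) - α i * b i j))] := by
    intro i; rw [hLc i]; simp only [← starRingEnd_apply]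
  have F1 : ∀ i, Bpc i.castSucc * Lc i
      = (A.map Complex.ofReal) * Zc i - (E.map Complex.ofReal) * Dm i := by
    intro i
    rw [← Bmap i.castSucc]
    exact adi_F1lem _ _ _ (yc i) (b i) (s i) (α i) (β i) _ _ _ _
      (hZc' i) (hLc' i) (by rw [hDm]) (R1e i) (R1c i)
  have F2 : ∀ i, (Lc i)ᴴ * Lc i = Mg i := by
    intro i
    rw [hMg]
    exact adi_F2lem (b i) (s i) (α i) (β i) _ (Lc i) (hre2 i) (hcsq i)
      (S1 i) (S2 i) (S3 i) (hβ2c i) (hLc' i)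
  have F3 : ∀ i, Zc i * (Dm i)ᴴ + Dm i * (Zc i)ᴴ = Zc i * Mg i * (Zc i)ᴴ := by
    intro i
    exact adi_F3lem (yc i) (α i) (s i) (β i) _ _ _ (hZc' i) (by rw [hDm]) (by rw [hMg])
  have stepD : ∀ i : Fin k, Bpc i.succ * (Bpc i.succ)ᴴ
      = Bpc i.castSucc * (Bpc i.castSucc)ᴴ
        + ((A.map Complex.ofReal) * (Zc i * (Zc i)ᴴ) * (E.map Complex.ofReal)ᴴ
          + (E.map Complex.ofReal) * (Zc i * (Zc i)ᴴ) * (A.map Complex.ofReal)ᴴ) := by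
    intro i
    rw [hBpcsucc i]
    exact adi_stepAlg (Bpc i.castSucc) (E.map Complex.ofReal) (A.map Complex.ofReal)
      (Zc i) (Dm i) (Lc i) (Mg i) (F1 i) (F2 i) (F3 i)
  -- telescoping
  have tele : ∑ i : Fin k,
      ((A.map Complex.ofReal) * (Zc i * (Zc i)ᴴ) * (E.map Complex.ofReal)ᴴ
        + (E.map Complex.ofReal) * (Zc i * (Zc i)ᴴ) * (A.map Complex.ofReal)ᴴ)
      = Bpc (Fin.last k) * (Bpc (Fin.last k))ᴴ
        - (B.map Complex.ofReal) * (B.map Complex.ofReal)ᴴ := by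
    have h := adi_telescope k (fun j => Bpc j * (Bpc j)ᴴ)
    rw [← hBpc0]
    rw [← h]
    refine Finset.sum_congr rfl fun i _ => ?_
    rw [stepD i]
    abel
  set P := ∑ i : Fin k, Zc i * (Zc i)ᴴ with hP
  have teleP : (A.map Complex.ofReal) * P * (E.map Complex.ofReal)ᴴ
      + (E.map Complex.ofReal) * P * (A.map Complex.ofReal)ᴴ
      = Bpc (Fin.last k) * (Bpc (Fin.last k))ᴴ
        - (B.map Complex.ofReal) * (B.map Complex.ofReal)ᴴ := by
    rw [← tele, hP, Finset.sum_add_distrib]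
    congr 1 <;> rw [Finset.mul_sum, Finset.sum_mul] <;>
      exact Finset.sum_congr rfl fun i _ => rfl
  -- decompose Z Zᵀ
  have hZZ : Z * Zᵀ = ∑ i : Fin k, Zr i * (Zr i)ᵀ := by
    ext r r₂
    simp only [Matrix.mul_apply, Matrix.transpose_apply, hZ, Matrix.sum_apply,
      Fintype.sum_prod_type]
  have hZZm : (Z * Zᵀ).map Complex.ofReal = P := by
    rw [hZZ, hP]
    have h1 : (∑ i : Fin k, Zr i * (Zr i)ᵀ).map Complex.ofReal
        = ∑ i : Fin k, ((Zr i).map Complex.ofReal) * ((Zr i).map Complex.ofReal)ᴴ := by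
      ext r r₂
      simp only [Matrix.map_apply, Matrix.sum_apply, Matrix.mul_apply,
        Matrix.transpose_apply, Matrix.conjTranspose_apply, ← starRingEnd_apply,
        Complex.conj_ofReal]
      push_cast
      rfl
    rw [h1]
    exact Finset.sum_congr rfl fun i _ => part1 i
  -- final assembly
  refine ⟨part1, Bmap, ?_⟩
  apply adi_mapRC_inj
  rw [adi_mapRC_add, adi_mapRC_add, adi_mapRC_mul (A*(Z*Zᵀ)) Eᵀ, adi_mapRC_mul A (Z*Zᵀ),
    adi_mapRC_mul (E*(Z*Zᵀ)) Aᵀ, adi_mapRC_mul E (Z*Zᵀ), adi_mapRC_mul B Bᵀ,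
    adi_mapRC_mul (Bp (Fin.last k)) (Bp (Fin.last k))ᵀ, hZZm]
  rw [← adi_mapRC_conjT E, ← adi_mapRC_conjT A, ← adi_mapRC_conjT B,
    ← adi_mapRC_conjT (Bp (Fin.last k)), Bmap (Fin.last k)]
  rw [teleP]
  abel
end

section
/- Let A, E ∈ ℝ^{n×n}, B ∈ ℝ^{n×m}, and let s_1, …, s_k ∈ ℂ with Re(s_i) > 0 and A − s_i E invertible for each i. Define the classical low-rank ADI iterates Z_1 = √(2 Re(s_1)) (A − s_1 E)^{-1} B and, for i ≥ 2, Z_i = √(Re(s_i)/Re(s_{i−1})) [I + (s_i + s̄_{i−1})(A − s_i E)^{-1} E] Z_{i−1}. Define a second iteration by B_{⊥,0} = B, Z'_i = √(2 Re(s_i)) (A − s_i E)^{-1} B_{⊥,i−1}, and B_{⊥,i} = B_{⊥,i−1} + √(2 Re(s_i)) E Z'_i. Then Z_i = Z'_i for every i = 1, …, k; i.e., the two iterations produce the same low-rank factor Z = [Z_1, …, Z_k]. -/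
open Matrix Complex

/-- Reformulation of the low-rank ADI iteration in terms of the residual factor
`B⊥` (Lemma 3): the classical iterates `Z i` coincide with the iterates `Z' i`
produced from the successive residual factors. -/
theorem adi_reformulation_residual_factor
    {n m : ℕ} (k : ℕ)
    (A E : Matrix (Fin n) (Fin n) ℝ) (B : Matrix (Fin n) (Fin m) ℝ)
    (Ac Ec : Matrix (Fin n) (Fin n) ℂ) (Bc : Matrix (Fin n) (Fin m) ℂ)
    (hAc : Ac = A.map Complex.ofReal) (hEc : Ec = E.map Complex.ofReal)
    (hBc : Bc = B.map Complex.ofReal)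
    (s : ℕ → ℂ) (hs : ∀ i < k, 0 < (s i).re)
    (hinv : ∀ i < k, IsUnit (Ac - s i • Ec).det)
    (Z Z' Bp : ℕ → Matrix (Fin n) (Fin m) ℂ)
    -- classical low-rank ADI iteration
    (hZ0 : Z 0 = (Real.sqrt (2 * (s 0).re) : ℂ) • ((Ac - s 0 • Ec)⁻¹ * Bc))
    (hZsucc : ∀ i, i + 1 < k →
      Z (i + 1) = (Real.sqrt ((s (i + 1)).re / (s i).re) : ℂ) •
        (((1 : Matrix (Fin n) (Fin n) ℂ)
            + (s (i + 1) + star (s i)) • ((Ac - s (i + 1) • Ec)⁻¹ * Ec)) * Z i))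
    -- reformulated iteration via the residual factor
    (hBp0 : Bp 0 = Bc)
    (hZ' : ∀ i < k,
      Z' i = (Real.sqrt (2 * (s i).re) : ℂ) • ((Ac - s i • Ec)⁻¹ * Bp i))
    (hBpsucc : ∀ i < k,
      Bp (i + 1) = Bp i + (Real.sqrt (2 * (s i).re) : ℂ) • (Ec * Z' i)) :
    ∀ i < k, Z i = Z' i := by

  intro i hik
  induction i with
  | zero => rw [hZ' 0 hik, hBp0, hZ0]
  | succ i ih =>
    have hik' : i < k := Nat.lt_of_succ_lt hik
    have hZi := ih hik'
    have hri : 0 < (s i).re := hs i hik'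
    have hri1 : 0 < (s (i+1)).re := hs (i+1) hik
    set M := Ac - s i • Ec with hM
    set N := Ac - s (i+1) • Ec with hN
    have hMinv : M * M⁻¹ = 1 := Matrix.mul_nonsing_inv _ (hinv i hik')
    have hNinv : N⁻¹ * N = 1 := Matrix.nonsing_inv_mul _ (hinv (i+1) hik)
    set c : ℂ := (Real.sqrt (2 * (s i).re) : ℂ) with hcdef
    set d : ℂ := (Real.sqrt ((s (i+1)).re / (s i).re) : ℂ) with hddef
    set t : ℂ := s (i+1) + star (s i) with htdef
    have hc : d * c = (Real.sqrt (2 * (s (i+1)).re) : ℂ) := by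
      rw [hcdef, hddef, ← Complex.ofReal_mul, ← Real.sqrt_mul (by positivity)]
      congr 2
      field_simp
    have hsq : c * c = ((2 * (s i).re : ℝ) : ℂ) := by
      rw [hcdef, ← Complex.ofReal_mul, Real.mul_self_sqrt (by positivity)]
    have hstar : ((2 * (s i).re : ℝ) : ℂ) = s i + star (s i) := by
      rw [Complex.star_def, Complex.add_conj]
    have key : M + ((2 * (s i).re : ℝ) : ℂ) • Ec = N + t • Ec := by
      rw [hM, hN, hstar, htdef]
      module
    set X : Matrix (Fin n) (Fin m) ℂ := M⁻¹ * Bp i with hXdef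
    have hBp : Bp i = M * X := by
      rw [hXdef, ← Matrix.mul_assoc, hMinv, Matrix.one_mul]
    rw [hZ' (i+1) hik, hBpsucc i hik', hZ' i hik', hZsucc i hik, hZi, hZ' i hik']
    calc d • (((1 : Matrix (Fin n) (Fin n) ℂ) + t • (N⁻¹ * Ec)) * (c • X))
        = (d * c) • (X + t • (N⁻¹ * (Ec * X))) := by
          rw [Matrix.mul_smul, smul_smul, Matrix.add_mul, Matrix.one_mul,
            Matrix.smul_mul, Matrix.mul_assoc]
      _ = (Real.sqrt (2 * (s (i+1)).re) : ℂ) • (N⁻¹ * (Bp i + c • (Ec * (c • X)))) := by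
          rw [hc]
          congr 1
          rw [Matrix.mul_smul, smul_smul, hsq]
          rw [show Bp i + ((2 * (s i).re : ℝ) : ℂ) • (Ec * X) = (N + t • Ec) * X by
            rw [hBp, ← Matrix.smul_mul, ← Matrix.add_mul, key]]
          rw [Matrix.add_mul, Matrix.smul_mul, Matrix.mul_add, Matrix.mul_smul,
            ← Matrix.mul_assoc N⁻¹ N X, hNinv, Matrix.one_mul]
end

section
/- Let A, E ∈ ℝ^{n×n}, B ∈ ℝ^{n×m}, let s_1, …, s_k ∈ ℂ with Re(s_i) > 0 and A − s_i E invertible, and let b_1, …, b_k ∈ ℂ^m be tangential directions. Set V = [(A − s_1 E)^{-1} B b_1, …, (A − s_k E)^{-1} B b_k] ∈ ℂ^{n×k}, S = diag(s_1, …, s_k) ∈ ℂ^{k×k}, and L = [b_1, …, b_k] ∈ ℂ^{m×k}. Then (i) A V − E V S = B L; and (ii) if X ∈ ℂ^{k×k} is Hermitian, invertible, and satisfies X S + S^H X = L^H L, then the tangential ADI approximation P̂ = V X^{-1} V^H and the matrix B_⊥ = B + E V X^{-1} L^H satisfy A P̂ Eᵀ + E P̂ Aᵀ + B Bᵀ =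 B_⊥ B_⊥^H. -/
open Matrix Complex

/-- Tangential generalization of the Krylov computation of the ADI
approximation (Section 3): the tangential Krylov basis `V` satisfies the
Sylvester equation `A V − E V S = B L`, and any Hermitian invertible solution
`X` of `X S + Sᴴ X = Lᴴ L` yields the residual factorization for the
tangential ADI approximation `P̂ = V X⁻¹ Vᴴ`. -/
theorem tangential_krylov_adi
    {n m k : ℕ}
    (A E : Matrix (Fin n) (Fin n) ℝ) (B : Matrix (Fin n) (Fin m) ℝ)
    (Ac Ec : Matrix (Fin n) (Fin n) ℂ) (Bc : Matrix (Fin n) (Fin m) ℂ)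
    (hAc : Ac = A.map Complex.ofReal) (hEc : Ec = E.map Complex.ofReal)
    (hBc : Bc = B.map Complex.ofReal)
    (s : Fin k → ℂ) (hs : ∀ i, 0 < (s i).re)
    (hinv : ∀ i, IsUnit (Ac - s i • Ec).det)
    (b : Fin k → Fin m → ℂ)
    -- V = [(A−s₁E)⁻¹ B b₁, …, (A−s_kE)⁻¹ B b_k]
    (V : Matrix (Fin n) (Fin k) ℂ)
    (hV : ∀ r i, V r i = ((Ac - s i • Ec)⁻¹ *ᵥ (Bc *ᵥ b i)) r)
    -- S = diag(s₁, …, s_k), L = [b₁, …, b_k]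
    (S : Matrix (Fin k) (Fin k) ℂ) (hS : S = Matrix.diagonal s)
    (L : Matrix (Fin m) (Fin k) ℂ) (hL : ∀ j i, L j i = b i j) :
    Ac * V - Ec * V * S = Bc * L
      ∧ ∀ X : Matrix (Fin k) (Fin k) ℂ, X.IsHermitian → IsUnit X.det →
          X * S + Sᴴ * X = Lᴴ * L →
          Ac * (V * X⁻¹ * Vᴴ) * Ecᵀ + Ec * (V * X⁻¹ * Vᴴ) * Acᵀ + Bc * Bcᵀ
            = (Bc + Ec * V * X⁻¹ * Lᴴ) * (Bc + Ec * V * X⁻¹ * Lᴴ)ᴴ := by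
  have part1 : Ac * V - Ec * V * S = Bc * L := by
    subst hS
    ext r i
    have hcol : (Ac - s i • Ec) *ᵥ (fun j => V j i) = Bc *ᵥ b i := by
      have h : (fun j => V j i) = (Ac - s i • Ec)⁻¹ *ᵥ (Bc *ᵥ b i) :=
        funext (fun r => hV r i)
      rw [h, mulVec_mulVec, Matrix.mul_nonsing_inv _ (hinv i), one_mulVec]
    have := congrFun hcol r
    simp only [Matrix.mulVec, dotProduct, Matrix.sub_apply, Matrix.smul_apply,
      smul_eq_mul, sub_mul] at this
    simp only [Matrix.sub_apply, Matrix.mul_diagonal]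
    simp only [Matrix.mul_apply, hL]
    rw [Finset.sum_sub_distrib] at this
    rw [← this]
    congr 1
    rw [Finset.sum_mul]
    exact Finset.sum_congr rfl (fun j _ => by ring)
  refine ⟨part1, ?_⟩
  intro X hX hXdet hXS
  -- real matrices: conjTranspose = transpose
  have hCT : ∀ {p q : ℕ} (M : Matrix (Fin p) (Fin q) ℝ),
      (M.map (Complex.ofReal))ᵀ = (M.map (Complex.ofReal))ᴴ := by
    intro p q M
    ext i j
    simp [Matrix.conjTranspose_apply, Matrix.map_apply]
  have hEt : Ecᵀ = Ecᴴ := by rw [hEc]; exact hCT E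
  have hAt : Acᵀ = Acᴴ := by rw [hAc]; exact hCT A
  have hBt : Bcᵀ = Bcᴴ := by rw [hBc]; exact hCT B
  rw [hEt, hAt, hBt]
  have hXi : X⁻¹ᴴ = X⁻¹ := by
    rw [Matrix.conjTranspose_nonsing_inv, hX.eq]
  have h1 : Ac * V = Bc * L + Ec * V * S := by
    rw [← part1]; abel
  have h1H : Vᴴ * Acᴴ = Lᴴ * Bcᴴ + Sᴴ * (Vᴴ * Ecᴴ) := by
    rw [← Matrix.conjTranspose_mul, h1]
    simp [Matrix.conjTranspose_mul, Matrix.mul_assoc]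
  have key : S * X⁻¹ + X⁻¹ * Sᴴ = X⁻¹ * (Lᴴ * L) * X⁻¹ := by
    rw [← hXS]
    rw [Matrix.mul_add, Matrix.add_mul]
    rw [← Matrix.mul_assoc, ← Matrix.mul_assoc, Matrix.nonsing_inv_mul _ hXdet,
      Matrix.mul_assoc (X⁻¹ * Sᴴ), Matrix.mul_nonsing_inv _ hXdet]
    simp
  have e1 : Ac * (V * X⁻¹ * Vᴴ) * Ecᴴ
      = Bc * L * X⁻¹ * (Vᴴ * Ecᴴ) + Ec * V * (S * X⁻¹) * (Vᴴ * Ecᴴ) := by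
    calc Ac * (V * X⁻¹ * Vᴴ) * Ecᴴ
        = (Ac * V) * (X⁻¹ * (Vᴴ * Ecᴴ)) := by simp [Matrix.mul_assoc]
      _ = (Bc * L + Ec * V * S) * (X⁻¹ * (Vᴴ * Ecᴴ)) := by rw [h1]
      _ = _ := by simp [Matrix.add_mul, Matrix.mul_assoc]
  have e2 : Ec * (V * X⁻¹ * Vᴴ) * Acᴴ
      = Ec * V * X⁻¹ * Lᴴ * Bcᴴ + Ec * V * (X⁻¹ * Sᴴ) * (Vᴴ * Ecᴴ) := by
    calc Ec * (V * X⁻¹ * Vᴴ) * Acᴴ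
        = Ec * V * X⁻¹ * (Vᴴ * Acᴴ) := by simp [Matrix.mul_assoc]
      _ = Ec * V * X⁻¹ * (Lᴴ * Bcᴴ + Sᴴ * (Vᴴ * Ecᴴ)) := by rw [h1H]
      _ = _ := by simp [Matrix.mul_add, Matrix.mul_assoc]
  have e3 : Ec * V * (S * X⁻¹) * (Vᴴ * Ecᴴ) + Ec * V * (X⁻¹ * Sᴴ) * (Vᴴ * Ecᴴ)
      = (Ec * V * X⁻¹ * Lᴴ) * (L * X⁻¹ * (Vᴴ * Ecᴴ)) := by
    rw [← Matrix.add_mul, ← Matrix.mul_add, key]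
    simp [Matrix.mul_assoc]
  rw [e1, e2]
  have rhs : (Bc + Ec * V * X⁻¹ * Lᴴ) * (Bc + Ec * V * X⁻¹ * Lᴴ)ᴴ
      = Bc * Bcᴴ + Bc * (L * X⁻¹ * (Vᴴ * Ecᴴ)) + Ec * V * X⁻¹ * Lᴴ * Bcᴴ
        + (Ec * V * X⁻¹ * Lᴴ) * (L * X⁻¹ * (Vᴴ * Ecᴴ)) := by
    simp only [Matrix.conjTranspose_add, Matrix.conjTranspose_mul, hXi,
      Matrix.conjTranspose_conjTranspose]
    rw [Matrix.add_mul, Matrix.mul_add, Matrix.mul_add]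
    simp [Matrix.mul_assoc]
    abel
  rw [rhs, ← e3]
  rw [show Bc * L * X⁻¹ * (Vᴴ * Ecᴴ) = Bc * (L * X⁻¹ * (Vᴴ * Ecᴴ)) by
    simp [Matrix.mul_assoc]]
  abel
end

section
/- Let A, E ∈ ℝ^{n×n} and B ∈ ℝ^{n×m} be real, let V ∈ ℂ^{n×q}, S ∈ ℂ^{q×q}, L ∈ ℂ^{m×q} satisfy the Sylvester equation A V − E V S = B L, and let X ∈ ℂ^{q×q} be Hermitian, invertible, and satisfy X S + S^H X = L^H L. Then, with P̂ = V X^{-1} V^H and B_⊥ = B + E V X^{-1} L^H, the Lyapunov residual factorizes as A P̂ Eᵀ + E P̂ Aᵀ + B Bᵀ = B_⊥ B_⊥^H. -/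
open Matrix Complex

/-- Low-rank residual factorization for the Krylov formulation of the ADI
approximation (equation (12) and Remark 3): if `A V − E V S = B L` and the
Hermitian invertible `X` solves `X S + Sᴴ X = Lᴴ L`, then with
`P̂ = V X⁻¹ Vᴴ` and `B⊥ = B + E V X⁻¹ Lᴴ` the Lyapunov residual factorizes as
`B⊥ B⊥ᴴ`. -/
theorem krylov_adi_residual_factorization
    {n m q : ℕ}
    (A E : Matrix (Fin n) (Fin n) ℝ) (B : Matrix (Fin n) (Fin m) ℝ)
    (Ac Ec : Matrix (Fin n) (Fin n) ℂ) (Bc : Matrix (Fin n) (Fin m) ℂ)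
    (hAc : Ac = A.map Complex.ofReal) (hEc : Ec = E.map Complex.ofReal)
    (hBc : Bc = B.map Complex.ofReal)
    (V : Matrix (Fin n) (Fin q) ℂ)
    (S : Matrix (Fin q) (Fin q) ℂ)
    (L : Matrix (Fin m) (Fin q) ℂ)
    (hSyl : Ac * V - Ec * V * S = Bc * L)
    (X : Matrix (Fin q) (Fin q) ℂ)
    (hXherm : X.IsHermitian) (hXinv : IsUnit X.det)
    (hXlyap : X * S + Sᴴ * X = Lᴴ * L)
    (Phat : Matrix (Fin n) (Fin n) ℂ) (hPhat : Phat = V * X⁻¹ * Vᴴ)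
    (Bperp : Matrix (Fin n) (Fin m) ℂ) (hBperp : Bperp = Bc + Ec * V * X⁻¹ * Lᴴ) :
    Ac * Phat * Ecᵀ + Ec * Phat * Acᵀ + Bc * Bcᵀ = Bperp * Bperpᴴ := by
  have hEt : Ecᵀ = Ecᴴ := by
    subst hEc; ext i j; simp [conjTranspose_apply, Matrix.map_apply]
  have hAt : Acᵀ = Acᴴ := by
    subst hAc; ext i j; simp [conjTranspose_apply, Matrix.map_apply]
  have hBt : Bcᵀ = Bcᴴ := by
    subst hBc; ext i j; simp [conjTranspose_apply, Matrix.map_apply]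
  set Y := X⁻¹ with hYdef
  have hXY : X * Y = 1 := Matrix.mul_nonsing_inv X hXinv
  have hYX : Y * X = 1 := Matrix.nonsing_inv_mul X hXinv
  have hYh : Yᴴ = Y := hXherm.inv
  have hAV : Ac * V = Bc * L + Ec * V * S := by
    rw [← hSyl]; simp
  have hAVM : ∀ M : Matrix (Fin q) (Fin n) ℂ,
      Ac * (V * M) = Bc * (L * M) + Ec * (V * (S * M)) := by
    intro M
    rw [← Matrix.mul_assoc, hAV, Matrix.add_mul]
    simp [Matrix.mul_assoc]
  have hVAc : Vᴴ * Acᴴ = Lᴴ * Bcᴴ + Sᴴ * (Vᴴ * Ecᴴ) := by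
    have h := congrArg conjTranspose hAV
    simpa [conjTranspose_mul, Matrix.mul_assoc] using h
  have hkey : S * Y + Y * Sᴴ = Y * (Lᴴ * L) * Y := by
    have h := congrArg (fun M => Y * M * Y) hXlyap
    simp only [add_mul, mul_add, ← Matrix.mul_assoc] at h
    rw [hYX] at h
    simp only [Matrix.mul_assoc, hXY] at h
    simpa [Matrix.mul_assoc] using h
  have hkeyM : ∀ M : Matrix (Fin q) (Fin n) ℂ,
      S * (Y * M) + Y * (Sᴴ * M) = Y * (Lᴴ * (L * (Y * M))) := by
    intro M
    have h := congrArg (fun N => N * M) hkey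
    simpa [Matrix.add_mul, Matrix.mul_assoc] using h
  subst hPhat hBperp
  rw [hEt, hAt, hBt]
  simp only [Matrix.mul_assoc]
  rw [hAVM, hVAc]
  simp only [conjTranspose_add, conjTranspose_mul, conjTranspose_conjTranspose, hYh,
    Matrix.add_mul, Matrix.mul_add, Matrix.mul_assoc]
  have hc : Ec * (V * (S * (Y * (Vᴴ * Ecᴴ)))) + Ec * (V * (Y * (Sᴴ * (Vᴴ * Ecᴴ))))
      = Ec * (V * (Y * (Lᴴ * (L * (Y * (Vᴴ * Ecᴴ)))))) := by
    rw [← Matrix.mul_add, ← Matrix.mul_add, hkeyM]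
  linear_combination (norm := abel) hc
end

section
/- Let y ∈ ℂ^n and α ∈ ℂ with |α| < 1, and set β = 1/√(1 − |α|²) and γ = √(1 + Re(α)). Then the complex matrix Z_c = [y, β(ȳ − α y)] ∈ ℂ^{n×2} and the real matrix Z_r = (√2/γ)·[Re(y), β(Im(α)·Re(y) + γ²·Im(y))] ∈ ℝ^{n×2} satisfy Z_r Z_rᵀ = Z_c Z_c^H. -/
open Matrix Complex

/-- Equivalence of the complex and the real-arithmetic formulation of one
tangential ADI step for a complex conjugated shift pair (core identity in the
proof of Theorem 6): `Z_r Z_rᵀ = Z_c Z_cᴴ`. -/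
theorem real_vs_complex_adi_block
    {n : ℕ} (y : Fin n → ℂ) (α : ℂ) (hα : ‖α‖ < 1)
    (β γ : ℝ)
    (hβ : β = (Real.sqrt (1 - Complex.normSq α))⁻¹)
    (hγ : γ = Real.sqrt (1 + α.re))
    (Zc : Matrix (Fin n) (Fin 2) ℂ)
    (hZc : Zc = Matrix.of fun r => ![y r, (β : ℂ) * (star (y r) - α * y r)])
    (Zr : Matrix (Fin n) (Fin 2) ℝ)
    (hZr : Zr = Matrix.of fun r =>
      ![(Real.sqrt 2 / γ) * (y r).re,
        (Real.sqrt 2 / γ) * (β * (α.im * (y r).re + γ ^ 2 * (y r).im))]) :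
    (Zr * Zrᵀ).map Complex.ofReal = Zc * Zcᴴ := by
  have hns : Complex.normSq α < 1 := by
    have h1 : Complex.normSq α = ‖α‖ ^ 2 := (Complex.sq_norm α).symm
    nlinarith [norm_nonneg α]
  have hre : |α.re| ≤ ‖α‖ := Complex.abs_re_le_norm α
  have hrepos : 0 < 1 + α.re := by
    have := abs_le.mp hre
    linarith
  have hnsq : Complex.normSq α = α.re ^ 2 + α.im ^ 2 := by
    simp [Complex.normSq_apply]; ring
  have hns' : α.re ^ 2 + α.im ^ 2 < 1 := by rw [← hnsq]; exact hns
  have hβ2 : β ^ 2 * (1 - (α.re ^ 2 + α.im ^ 2)) = 1 := by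
    have hpos : 0 < 1 - Complex.normSq α := by linarith
    have hs : Real.sqrt (1 - Complex.normSq α) ^ 2 = 1 - Complex.normSq α :=
      Real.sq_sqrt hpos.le
    rw [hβ, inv_pow, hs, hnsq, inv_mul_cancel₀ (by rw [← hnsq]; linarith)]
  have hγ2 : γ ^ 2 = 1 + α.re := by
    rw [hγ]; exact Real.sq_sqrt hrepos.le
  have hγ0 : γ ≠ 0 := by
    rw [hγ]; positivity
  have h2 : Real.sqrt 2 ^ 2 = 2 := Real.sq_sqrt (by norm_num)
  rw [hγ2] at hZr
  subst hZc hZr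
  ext i j
  simp only [Matrix.map_apply, Matrix.mul_apply, Matrix.conjTranspose_apply,
    Fin.sum_univ_two, Matrix.of_apply, Matrix.transpose_apply,
    Matrix.cons_val_zero, Matrix.cons_val_one, Matrix.head_cons]
  set a := (y i).re with ha
  set b := (y i).im with hb
  set c := (y j).re with hc
  set d := (y j).im with hd
  apply Complex.ext
  · simp [Complex.mul_re, Complex.mul_im, ← ha, ← hb, ← hc, ← hd]
    field_simp
    ring_nf
    rw [h2, hγ2]
    linear_combination ((1+α.re)*b*d - (1-α.re)*a*c) * hβ2
  · simp [Complex.mul_re, Complex.mul_im, ← ha, ← hb, ← hc, ← hd]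
    linear_combination (b*c - a*d) * hβ2
end

section
/- Let A, E ∈ ℝ^{n×n}, B ∈ ℝ^{n×m}, s ∈ ℂ with Re(s) > 0, and assume A − sE is invertible. Set Z_1 = √(2 Re(s)) (A − sE)^{-1} B ∈ ℂ^{n×m} and B_⊥ = B + √(2 Re(s)) E Z_1. Then the Lyapunov residual of the one-step ADI approximation P̂_1 = Z_1 Z_1^H factorizes as A P̂_1 Eᵀ + E P̂_1 Aᵀ + B Bᵀ = B_⊥ B_⊥^H. -/
open Matrix Complex

/-- One-step residual factorization of the ADI iteration (equation (14) in the
proof of Lemma 3): for `Z₁ = √(2 Re s) (A − sE)⁻¹ B` and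
`Bperp = B + √(2 Re s) E Z₁`, the Lyapunov residual of `P̂₁ = Z₁ Z₁ᴴ` equals
`Bperp Bperpᴴ`. -/
theorem adi_one_step_residual_factorization
    {n m : ℕ}
    (A E : Matrix (Fin n) (Fin n) ℝ) (B : Matrix (Fin n) (Fin m) ℝ)
    (Ac Ec : Matrix (Fin n) (Fin n) ℂ) (Bc : Matrix (Fin n) (Fin m) ℂ)
    (hAc : Ac = A.map Complex.ofReal) (hEc : Ec = E.map Complex.ofReal)
    (hBc : Bc = B.map Complex.ofReal)
    (s : ℂ) (hs : 0 < s.re) (hinv : IsUnit (Ac - s • Ec).det)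
    (Z₁ : Matrix (Fin n) (Fin m) ℂ)
    (hZ₁ : Z₁ = (Real.sqrt (2 * s.re) : ℂ) • ((Ac - s • Ec)⁻¹ * Bc))
    (Bperp : Matrix (Fin n) (Fin m) ℂ)
    (hBperp : Bperp = Bc + (Real.sqrt (2 * s.re) : ℂ) • (Ec * Z₁)) :
    Ac * (Z₁ * Z₁ᴴ) * Ecᵀ + Ec * (Z₁ * Z₁ᴴ) * Acᵀ + Bc * Bcᵀ = Bperp * Bperpᴴ := by
  have hBcT : Bcᴴ = Bcᵀ := by
    subst hBc; ext i j; simp [conjTranspose_apply]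
  have hEcT : Ecᴴ = Ecᵀ := by
    subst hEc; ext i j; simp [conjTranspose_apply]
  set c : ℂ := (Real.sqrt (2 * s.re) : ℂ) with hc
  have hcstar : starRingEnd ℂ c = c := by simp [hc]
  have hc2 : c * c = s + starRingEnd ℂ s := by
    have h0 : (0:ℝ) ≤ 2 * s.re := by linarith
    rw [Complex.add_conj, hc, ← Complex.ofReal_mul, Real.mul_self_sqrt h0]
  have hAcH : Acᴴ = Aᵀ.map Complex.ofReal := by
    subst hAc; ext i j; simp [conjTranspose_apply]
  subst hBperp
  subst hZ₁
  obtain ⟨M, hM⟩ : ∃ M, M = Ac - s • Ec := ⟨_, rfl⟩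
  rw [← hM] at hinv ⊢
  have hMH : Mᴴ = Acᵀ - (starRingEnd ℂ) s • Ecᵀ := by
    rw [hM]
    subst hAc hEc
    ext i j
    simp [conjTranspose_apply]
  have hdetH : IsUnit Mᴴ.det := by
    rw [Matrix.det_conjTranspose]; exact hinv.star
  have hAcM : Ac = M + s • Ec := by rw [hM]; abel
  have hAcT : Acᵀ = Mᴴ + (starRingEnd ℂ) s • Ecᵀ := by rw [hMH]; abel
  rw [hAcT, hAcM]
  have h1 : M * M⁻¹ = 1 := Matrix.mul_nonsing_inv M hinv
  have h2 : Mᴴ⁻¹ * Mᴴ = 1 := Matrix.nonsing_inv_mul Mᴴ hdetH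
  have hcs : star c = c := hcstar
  have hcancel : ∀ {k : ℕ} (X : Matrix (Fin n) (Fin k) ℂ), M * (M⁻¹ * X) = X :=
    fun X => by rw [← Matrix.mul_assoc, h1, Matrix.one_mul]
  simp only [conjTranspose_add, conjTranspose_smul, conjTranspose_mul,
    Matrix.conjTranspose_nonsing_inv, hcstar, hcs, hBcT, hEcT]
  simp only [Matrix.mul_add, Matrix.add_mul, Matrix.smul_mul, Matrix.mul_smul,
    smul_smul, Matrix.mul_assoc, hcancel]
  simp only [h2, Matrix.mul_one]
  rw [hc2]
  simp only [hcancel, smul_add, smul_smul]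
  module
end

section
/- Let A, E ∈ ℝ^{n×n}, B ∈ ℝ^{n×m}, and let s_1, …, s_k ∈ ℂ with Re(s_i) > 0 and A − s_i E invertible for each i. Define B_{⊥,0} = B and, for i = 1, …, k, Z_i = √(2 Re(s_i)) (A − s_i E)^{-1} B_{⊥,i−1} and B_{⊥,i} = B_{⊥,i−1} + √(2 Re(s_i)) E Z_i. Then B_{⊥,k} = B + Σ_{i=1}^{k} √(2 Re(s_i)) E Z_i, and the low-rank factor Z = [Z_1, …, Z_k] satisfies the residual factorization A (Z Z^H) Eᵀ + E (Z Z^H) Aᵀ + B Bᵀ = B_{⊥,k} B_{⊥,k}^H. -/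
open Matrix Complex

/-- k-step residual factorization of the reformulated block ADI iteration
(equations (9) and (16) in the proof of Lemma 3):
`B⊥,k = B + Σ_{i<k} √(2 Re sᵢ) E Zᵢ` and the concatenated low-rank factor
`Z = [Z₁,…,Z_k]` satisfies the residual factorization. -/
theorem adi_k_step_residual_factorization
    {n m : ℕ} (k : ℕ)
    (A E : Matrix (Fin n) (Fin n) ℝ) (B : Matrix (Fin n) (Fin m) ℝ)
    (Ac Ec : Matrix (Fin n) (Fin n) ℂ) (Bc : Matrix (Fin n) (Fin m) ℂ)
    (hAc : Ac = A.map Complex.ofReal) (hEc : Ec = E.map Complex.ofReal)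
    (hBc : Bc = B.map Complex.ofReal)
    (s : ℕ → ℂ) (hs : ∀ i < k, 0 < (s i).re)
    (hinv : ∀ i < k, IsUnit (Ac - s i • Ec).det)
    (Z Bp : ℕ → Matrix (Fin n) (Fin m) ℂ)
    (hBp0 : Bp 0 = Bc)
    (hZ : ∀ i < k,
      Z i = (Real.sqrt (2 * (s i).re) : ℂ) • ((Ac - s i • Ec)⁻¹ * Bp i))
    (hBpsucc : ∀ i < k,
      Bp (i + 1) = Bp i + (Real.sqrt (2 * (s i).re) : ℂ) • (Ec * Z i))
    -- the concatenated low-rank factor Z = [Z₁, …, Z_k]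
    (Zfull : Matrix (Fin n) (Fin k × Fin m) ℂ)
    (hZfull : ∀ r p, Zfull r p = Z p.1 r p.2) :
    Bp k = Bc + ∑ i ∈ Finset.range k, (Real.sqrt (2 * (s i).re) : ℂ) • (Ec * Z i)
      ∧ Ac * (Zfull * Zfullᴴ) * Ecᵀ + Ec * (Zfull * Zfullᴴ) * Acᵀ + Bc * Bcᵀ
          = Bp k * (Bp k)ᴴ := by
  -- real matrices: conjTranspose = transpose
  have hEH : Ecᴴ = Ecᵀ := by
    subst hEc; ext i j; simp [conjTranspose_apply, transpose_apply, Matrix.map_apply]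
  have hAH : Acᴴ = Acᵀ := by
    subst hAc; ext i j; simp [conjTranspose_apply, transpose_apply, Matrix.map_apply]
  have hBH : Bcᴴ = Bcᵀ := by
    subst hBc; ext i j; simp [conjTranspose_apply, transpose_apply, Matrix.map_apply]
  -- part 1
  have part1 : ∀ j ≤ k, Bp j = Bc + ∑ i ∈ Finset.range j,
      (Real.sqrt (2 * (s i).re) : ℂ) • (Ec * Z i) := by
    intro j hj
    induction j with
    | zero => simp [hBp0]
    | succ j ih =>
      rw [hBpsucc j (by omega), ih (by omega), Finset.sum_range_succ, add_assoc]
  -- key identity per step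
  have key : ∀ i < k,
      ((Real.sqrt (2 * (s i).re) : ℂ)) • Bp i = (Ac - s i • Ec) * Z i := by
    intro i hi
    rw [hZ i hi, Matrix.mul_smul, ← Matrix.mul_assoc,
      Matrix.mul_nonsing_inv _ (hinv i hi), Matrix.one_mul]
  have hg2 : ∀ i < k, ((Real.sqrt (2 * (s i).re) : ℂ)) * (Real.sqrt (2 * (s i).re) : ℂ)
      = s i + starRingEnd ℂ (s i) := by
    intro i hi
    have h0 : (0:ℝ) ≤ 2 * (s i).re := by have := hs i hi; linarith
    have h1 : Real.sqrt (2 * (s i).re) * Real.sqrt (2 * (s i).re) = 2 * (s i).re :=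
      Real.mul_self_sqrt h0
    rw [← Complex.ofReal_mul, h1, Complex.add_conj]
  -- one-step residual identity
  have step : ∀ i < k,
      Ac * (Z i * (Z i)ᴴ) * Ecᵀ + Ec * (Z i * (Z i)ᴴ) * Acᵀ
        = Bp (i+1) * (Bp (i+1))ᴴ - Bp i * (Bp i)ᴴ := by
    intro i hi
    set g : ℂ := (Real.sqrt (2 * (s i).re) : ℂ) with hgdef
    have hstarg : star g = g := by
      simp [hgdef, Complex.star_def, Complex.conj_ofReal]
    have expand : Bp (i+1) * (Bp (i+1))ᴴ
        = Bp i * (Bp i)ᴴ + g • (Bp i * ((Ec * Z i))ᴴ) + g • ((Ec * Z i) * (Bp i)ᴴ)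
          + (g * g) • ((Ec * Z i) * ((Ec * Z i))ᴴ) := by
      rw [hBpsucc i hi, ← hgdef]
      simp only [Matrix.conjTranspose_add, Matrix.conjTranspose_smul, hstarg,
        Matrix.add_mul, Matrix.mul_add, Matrix.smul_mul, Matrix.mul_smul, smul_add, smul_smul]
      abel
    have term1 : g • (Bp i * ((Ec * Z i))ᴴ)
        = Ac * (Z i * (Z i)ᴴ) * Ecᵀ - s i • (Ec * (Z i * (Z i)ᴴ) * Ecᵀ) := by
      rw [← Matrix.smul_mul, key i hi]
      simp only [Matrix.conjTranspose_mul, hEH, Matrix.sub_mul, Matrix.smul_mul,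
        Matrix.mul_assoc]
    have term2 : g • ((Ec * Z i) * (Bp i)ᴴ)
        = Ec * (Z i * (Z i)ᴴ) * Acᵀ - (starRingEnd ℂ (s i)) • (Ec * (Z i * (Z i)ᴴ) * Ecᵀ) := by
      have : g • ((Ec * Z i) * (Bp i)ᴴ) = (Ec * Z i) * ((g • Bp i)ᴴ) := by
        rw [Matrix.conjTranspose_smul, hstarg, Matrix.mul_smul]
      rw [this, key i hi]
      simp only [Matrix.conjTranspose_mul, Matrix.conjTranspose_sub,
        Matrix.conjTranspose_smul, hEH, hAH, Matrix.mul_sub, Matrix.sub_mul,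
        Matrix.mul_smul, Matrix.smul_mul, Matrix.mul_assoc]
      simp [Complex.star_def]
    have term3 : (g * g) • ((Ec * Z i) * ((Ec * Z i))ᴴ)
        = (s i + starRingEnd ℂ (s i)) • (Ec * (Z i * (Z i)ᴴ) * Ecᵀ) := by
      rw [hg2 i hi]
      simp only [Matrix.conjTranspose_mul, hEH, Matrix.mul_assoc]
    rw [expand, term1, term2, term3, add_smul]
    abel
  -- Zfull Zfullᴴ as a sum
  have hZZ : Zfull * Zfullᴴ = ∑ i ∈ Finset.range k, Z i * (Z i)ᴴ := by
    ext r r'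
    simp only [Matrix.mul_apply, Matrix.conjTranspose_apply, hZfull,
      Matrix.sum_apply]
    rw [Fintype.sum_prod_type, ← Fin.sum_univ_eq_sum_range
      (fun i => ∑ j, Z i r j * star (Z i r' j))]
  refine ⟨part1 k le_rfl, ?_⟩
  have main : Ac * (Zfull * Zfullᴴ) * Ecᵀ + Ec * (Zfull * Zfullᴴ) * Acᵀ
      = Bp k * (Bp k)ᴴ - Bc * Bcᴴ := by
    rw [hZZ]
    rw [Finset.mul_sum, Finset.mul_sum, Finset.sum_mul, Finset.sum_mul,
      ← Finset.sum_add_distrib]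
    rw [Finset.sum_congr rfl (fun i hi => step i (Finset.mem_range.mp hi)),
      Finset.sum_range_sub (fun i => Bp i * (Bp i)ᴴ), hBp0]
  rw [main, ← hBH]
  abel
end

section
/- Let s ∈ ℂ with Re(s) > 0 and let b ∈ ℂ^m with b^H b = 1. Set α = (b^H b̄)·Re(s)/s̄, S = diag(s, s̄) ∈ ℂ^{2×2}, L = √(2 Re(s))·[b, b̄] ∈ ℂ^{m×2}, and X = [[1, α], [ᾱ, 1]] ∈ ℂ^{2×2}. Then X is Hermitian and satisfies X S + S^H X = L^H L. -/
open Matrix Complex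
/-- Explicit solution of the 2×2 projected Lyapunov-type equation associated
with one complex conjugated shift pair in the tangential ADI iteration
(proof of Theorem 5): `X = [[1, α], [ᾱ, 1]]` is Hermitian and solves
`X S + Sᴴ X = Lᴴ L` with `S = diag(s, s̄)` and `L = √(2 Re s)·[b, b̄]`. -/
theorem two_by_two_lyapunov_solution
    {m : ℕ} (s : ℂ) (hs : 0 < s.re)
    (b : Fin m → ℂ) (hb : ∑ j, star (b j) * b j = 1)
    (α : ℂ)
    (hα : α = (∑ j, (starRingEnd ℂ (b j)) ^ 2) * ((s.re : ℂ) / star s))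
    (S : Matrix (Fin 2) (Fin 2) ℂ) (hS : S = !![s, 0; 0, star s])
    (L : Matrix (Fin m) (Fin 2) ℂ)
    (hL : L = Matrix.of fun j =>
      ![(Real.sqrt (2 * s.re) : ℂ) * b j, (Real.sqrt (2 * s.re) : ℂ) * star (b j)])
    (X : Matrix (Fin 2) (Fin 2) ℂ) (hX : X = !![1, α; star α, 1]) :
    X.IsHermitian ∧ X * S + Sᴴ * X = Lᴴ * L := by
  have hsne : s ≠ 0 := fun h => by simp [h] at hs
  have hsbar : (starRingEnd ℂ) s ≠ 0 := by
    simp [Complex.ext_iff] at hsne ⊢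
    tauto
  have r2 : ((Real.sqrt 2 : ℝ) : ℂ) * (Real.sqrt 2 : ℝ) = 2 := by
    norm_cast
    exact Real.mul_self_sqrt (by norm_num)
  have rre : ((Real.sqrt s.re : ℝ) : ℂ) * (Real.sqrt s.re : ℝ) = (s.re : ℂ) := by
    norm_cast
    exact Real.mul_self_sqrt hs.le
  have key : ∀ f g : Fin m → ℂ,
      (∑ x, (Real.sqrt 2 : ℂ) * (Real.sqrt s.re : ℂ) * f x *
        ((Real.sqrt 2 : ℂ) * (Real.sqrt s.re : ℂ) * g x)) =
      2 * (s.re : ℂ) * ∑ x, f x * g x := by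
    intro f g
    rw [Finset.mul_sum]
    refine Finset.sum_congr rfl fun x _ => ?_
    linear_combination ((Real.sqrt s.re : ℂ) * (Real.sqrt s.re : ℂ) * f x * g x) * r2 +
      (2 * f x * g x) * rre
  have hb' : ∑ j, b j * (starRingEnd ℂ) (b j) = (1 : ℂ) := by
    rw [← hb]; exact Finset.sum_congr rfl fun j _ => mul_comm _ _
  have hbb : ∑ j, (starRingEnd ℂ) (b j) * b j = (1 : ℂ) := hb
  subst hS hL hX hα
  refine ⟨?_, ?_⟩
  · ext i j
    fin_cases i <;> fin_cases j <;> simp [Matrix.conjTranspose_apply]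
  · ext i k
    fin_cases i <;> fin_cases k <;>
      simp [Matrix.mul_apply, Fin.sum_univ_two, Matrix.conjTranspose_apply] <;>
      rw [key]
    · rw [hbb, Complex.add_conj]; push_cast; ring
    · field_simp
      simp only [pow_two]
      ring
    · field_simp
      simp only [pow_two]
      ring
    · rw [hb', add_comm, Complex.add_conj]; push_cast; ring
end

section
/- Let A, E ∈ ℝ^{n×n}, B ∈ ℝ^{n×m}, let s > 0 be a real shift with A − sE invertible, and let b_1, …, b_m ∈ ℝ^m be an orthonormal family. Consider the tangential ADI iteration with the constant shift s: B_{⊥,0} = B, z_i = √(2s) (A − sE)^{-1} B_{⊥,i−1} b_i, B_{⊥,i} = B_{⊥,i−1} + √(2s) E z_i b_iᵀ, for i = 1, …, m. Then z_i = √(2s) (A − sE)^{-1} B b_i for every i, so that [z_1, …, z_m] = √(2s) (A − sE)^{-1} B · [b_1, …, b_m]; i.e., the tangential iteration with m copies of one real shift and orthonormal tangential directions reproduces (up to the orthogonal factor [b_1, …, b_m]) the first block ADI iterate Z_1 = √(2s) (A − sE)^{-1} B. -/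
open Matrix

/-- The block ADI iteration is a special case of the tangential ADI iteration
(Section 4.4): with `m` copies of one real shift `s` and orthonormal tangential
directions `b₁, …, b_m`, the tangential iterates satisfy
`zᵢ = √(2s)(A − sE)⁻¹ B bᵢ`, so that
`[z₁, …, z_m] = √(2s)(A − sE)⁻¹ B · [b₁, …, b_m]`. -/
theorem tangential_adi_reproduces_block_step
    {n m : ℕ}
    (A E : Matrix (Fin n) (Fin n) ℝ) (B : Matrix (Fin n) (Fin m) ℝ)
    (s : ℝ) (hs : 0 < s) (hinv : IsUnit (A - s • E).det)
    (b : Fin m → Fin m → ℝ)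
    (hb : ∀ i j, (∑ l, b i l * b j l) = if i = j then 1 else 0)
    (z : Fin m → Fin n → ℝ)
    (Bp : Fin (m + 1) → Matrix (Fin n) (Fin m) ℝ)
    (hBp0 : Bp 0 = B)
    (hz : ∀ i : Fin m,
      z i = Real.sqrt (2 * s) • ((A - s • E)⁻¹ *ᵥ (Bp i.castSucc *ᵥ b i)))
    (hBpsucc : ∀ i : Fin m,
      Bp i.succ = Bp i.castSucc + Real.sqrt (2 * s) • (E * vecMulVec (z i) (b i))) :
    (∀ i : Fin m, z i = Real.sqrt (2 * s) • ((A - s • E)⁻¹ *ᵥ (B *ᵥ b i)))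
      ∧ (Matrix.of fun (r : Fin n) (c : Fin m) => z c r)
          = Real.sqrt (2 * s) •
              ((A - s • E)⁻¹ * B * Matrix.of fun (j : Fin m) (i : Fin m) => b i j) := by
  have key : ∀ j : Fin (m + 1), ∀ i : Fin m, (j : ℕ) ≤ (i : ℕ) →
      Bp j *ᵥ b i = B *ᵥ b i := by
    intro j
    induction j using Fin.induction with
    | zero => intro i _; rw [hBp0]
    | succ k ih =>
      intro i hi
      have hki : (k : ℕ) < (i : ℕ) := by simpa using hi
      have hne : k ≠ i := by
        intro h; subst h; exact lt_irrefl _ hki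
      have horth : b k ⬝ᵥ b i = 0 := by
        have := hb k i
        simp [dotProduct, this, hne]
      have hv : vecMulVec (z k) (b k) *ᵥ b i = 0 := by
        ext r
        simp only [vecMulVec, mulVec, dotProduct, of_apply, Pi.zero_apply, mul_assoc,
          ← Finset.mul_sum]
        simp [dotProduct] at horth
        simp [horth]
      rw [hBpsucc k, add_mulVec, smul_mulVec, ← mulVec_mulVec, hv]
      simp [ih i (le_of_lt hki)]
  have h1 : ∀ i : Fin m, z i = Real.sqrt (2 * s) • ((A - s • E)⁻¹ *ᵥ (B *ᵥ b i)) := by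
    intro i
    rw [hz i, key i.castSucc i (by simp)]
  refine ⟨h1, ?_⟩
  ext r c
  have hc := congrFun (h1 c) r
  simp only [of_apply]
  rw [hc]
  simp [mulVec, dotProduct, Matrix.mul_apply, Finset.mul_sum, Finset.sum_mul,
    mul_assoc, mul_comm, mul_left_comm]
end
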